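/- arXiv:2103.09722 — 4 statements merged into one kernel-verified Lean document; each statement's English description precedes it below -/
import Mathlib

section
/- Let q ≥ 2 be odd, let (P, L) be a finite projective plane of order q, let B be a projective bundle, and let ℓ ∈ L be a line. Then every point Q ∈ P with Q ∉ ℓ lies on exactly 0 or exactly 2 ovals of B that are tangent to ℓ. -/
/-- A finite projective plane of order `q`, given by its set of lines (each line a
finite set of points of the ambient point type `P`): any two distinct points lie on
exactly one common line, any two distinct lines meet in exactly one point, there are
four points no three of which are collinear, and every line has `q + 1` points. -/
structure IsProjectivePlane (q : ℕ) {P : Type} [DecidableEq P] (L : Finset (Finset P)) : Prop where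
  exists_unique_line : ∀ p₁ p₂ : P, p₁ ≠ p₂ → ∃! ℓ, ℓ ∈ L ∧ p₁ ∈ ℓ ∧ p₂ ∈ ℓ
  exists_unique_point : ∀ ℓ₁ ∈ L, ∀ ℓ₂ ∈ L, ℓ₁ ≠ ℓ₂ → ∃! p, p ∈ ℓ₁ ∧ p ∈ ℓ₂
  nondeg : ∃ a b c d : P, a ≠ b ∧ a ≠ c ∧ a ≠ d ∧ b ≠ c ∧ b ≠ d ∧ c ≠ d ∧
      ∀ ℓ ∈ L, (ℓ ∩ ({a, b, c, d} : Finset P)).card ≤ 2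
  card_line : ∀ ℓ ∈ L, ℓ.card = q + 1

/-- An oval: a set of `q + 1` points such that every line contains at most two of them. -/
def IsOval (q : ℕ) {P : Type} [DecidableEq P] (L : Finset (Finset P)) (O : Finset P) : Prop :=
  O.card = q + 1 ∧ ∀ ℓ ∈ L, (ℓ ∩ O).card ≤ 2

/-- A projective bundle: a set of `q² + q + 1` ovals, any two of which meet in
exactly one point. -/
def IsProjectiveBundle (q : ℕ) {P : Type} [DecidableEq P] (L : Finset (Finset P))
    (B : Finset (Finset P)) : Prop :=
  B.card = q ^ 2 + q + 1 ∧ (∀ o ∈ B, IsOval q L o) ∧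
    ∀ o₁ ∈ B, ∀ o₂ ∈ B, o₁ ≠ o₂ → (o₁ ∩ o₂).card = 1

set_option linter.unusedSectionVars false

noncomputable def onept {P : Type*} (s : Finset P) (d : P) : P :=
  if h : s.Nonempty then h.choose else d

lemma onept_mem {P : Type*} {s : Finset P} (h : s.Nonempty) (d : P) : onept s d ∈ s := by
  rw [onept, dif_pos h]; exact h.choose_spec

section Aux
variable {q : ℕ} {P : Type} [Fintype P] [DecidableEq P] {L : Finset (Finset P)}

lemma lines_eq_of_two_pts (hL : IsProjectivePlane q L) {l₁ l₂ : Finset P} (h₁ : l₁ ∈ L)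
    (h₂ : l₂ ∈ L) {x y : P} (hxy : x ≠ y) (hx1 : x ∈ l₁) (hy1 : y ∈ l₁) (hx2 : x ∈ l₂)
    (hy2 : y ∈ l₂) : l₁ = l₂ := by
  by_contra hne
  obtain ⟨p, _, hu⟩ := hL.exists_unique_point l₁ h₁ l₂ h₂ hne
  exact hxy ((hu x ⟨hx1, hx2⟩).trans (hu y ⟨hy1, hy2⟩).symm)

lemma exists_line_avoiding (hL : IsProjectivePlane q L) (x : P) : ∃ m ∈ L, x ∉ m := by
  obtain ⟨a, b, c, d, hab, hac, had, hbc, hbd, hcd, hgen⟩ := hL.nondeg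
  obtain ⟨lab, ⟨habL, haab, hbab⟩, _⟩ := hL.exists_unique_line a b hab
  obtain ⟨lcd, ⟨hcdL, hccd, hdcd⟩, _⟩ := hL.exists_unique_line c d hcd
  obtain ⟨lac, ⟨hacL, haac, hcac⟩, _⟩ := hL.exists_unique_line a c hac
  have key : ∀ l ∈ L, ∀ u v w : P, u ≠ v → u ≠ w → v ≠ w →
      u ∈ ({a,b,c,d} : Finset P) → v ∈ ({a,b,c,d} : Finset P) → w ∈ ({a,b,c,d} : Finset P) →
      u ∈ l → v ∈ l → w ∉ l := by
    intro l hl u v w huv huw hvw hu hv hw hul hvl hwl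
    have hsub : ({u, v, w} : Finset P) ⊆ l ∩ ({a,b,c,d} : Finset P) := by
      intro z hz
      simp only [Finset.mem_insert, Finset.mem_singleton] at hz
      rcases hz with rfl | rfl | rfl <;> simp [Finset.mem_inter, *]
    have h3 : ({u, v, w} : Finset P).card = 3 := by
      rw [Finset.card_insert_of_notMem (by simp [huv, huw]),
        Finset.card_insert_of_notMem (by simp [hvw])]
      simp
    have h1 := Finset.card_le_card hsub
    have h2 := hgen l hl
    omega
  by_cases h1 : x ∈ lab
  · by_cases h2 : x ∈ lcd
    · by_cases h3 : x ∈ lac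
      · exfalso
        have hcnab : c ∉ lab := key lab habL a b c hab hac hbc (by simp) (by simp) (by simp) haab hbab
        have hanlcd : a ∉ lcd := key lcd hcdL c d a hcd hac.symm had.symm (by simp) (by simp) (by simp) hccd hdcd
        have hne1 : lab ≠ lac := fun h => hcnab (h ▸ hcac)
        obtain ⟨p, _, hu⟩ := hL.exists_unique_point lab habL lac hacL hne1
        have hxa : x = a := (hu x ⟨h1, h3⟩).trans (hu a ⟨haab, haac⟩).symm
        exact hanlcd (hxa ▸ h2)
      · exact ⟨lac, hacL, h3⟩
    · exact ⟨lcd, hcdL, h2⟩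
  · exact ⟨lab, habL, h1⟩


lemma pencil_card (hL : IsProjectivePlane q L) (x : P) :
    (L.filter fun n => x ∈ n).card = q + 1 := by
  obtain ⟨m, hm, hxm⟩ := exists_line_avoiding hL x
  have h : ∀ n ∈ L.filter fun n => x ∈ n, ∃! p, p ∈ n ∧ p ∈ m := by
    intro n hn
    rw [Finset.mem_filter] at hn
    exact hL.exists_unique_point n hn.1 m hm (fun h => hxm (h ▸ hn.2))
  rw [← hL.card_line m hm]
  apply Finset.card_bij (fun n hn => (h n hn).exists.choose)
  · intro n hn; exact (h n hn).exists.choose_spec.2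
  · intro n₁ hn₁ n₂ hn₂ heq
    have s₁ := (h n₁ hn₁).exists.choose_spec
    have s₂ := (h n₂ hn₂).exists.choose_spec
    have m₁ := Finset.mem_filter.mp hn₁
    have m₂ := Finset.mem_filter.mp hn₂
    have hpx : (h n₁ hn₁).exists.choose ≠ x := fun hc => hxm (hc ▸ s₁.2)
    exact lines_eq_of_two_pts hL m₁.1 m₂.1 hpx s₁.1 m₁.2 (heq ▸ s₂.1) m₂.2
  · intro y hy
    have hxy : x ≠ y := fun h => hxm (h ▸ hy)
    obtain ⟨n, ⟨hnL, hxn, hyn⟩, _⟩ := hL.exists_unique_line x y hxy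
    have hn : n ∈ L.filter fun n => x ∈ n := Finset.mem_filter.mpr ⟨hnL, hxn⟩
    refine ⟨n, hn, ?_⟩
    exact (h n hn).unique (h n hn).exists.choose_spec ⟨hyn, hy⟩

lemma card_points (hL : IsProjectivePlane q L) : Fintype.card P = q ^ 2 + q + 1 := by
  obtain ⟨a, -, -, -, -⟩ := hL.nondeg
  set F := L.filter fun n => a ∈ n with hF
  have hdisj : ∀ n₁ ∈ F, ∀ n₂ ∈ F, n₁ ≠ n₂ → Disjoint (n₁.erase a) (n₂.erase a) := by
    intro n₁ h₁ n₂ h₂ hne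
    have m₁ := Finset.mem_filter.mp h₁
    have m₂ := Finset.mem_filter.mp h₂
    refine Finset.disjoint_left.mpr ?_
    intro z hz₁ hz₂
    obtain ⟨hza, hz₁⟩ := Finset.mem_erase.mp hz₁
    obtain ⟨-, hz₂⟩ := Finset.mem_erase.mp hz₂
    exact hne (lines_eq_of_two_pts hL m₁.1 m₂.1 hza hz₁ m₁.2 hz₂ m₂.2)
  have huniv : (Finset.univ : Finset P) = insert a (F.biUnion fun n => n.erase a) := by
    ext z
    simp only [Finset.mem_univ, true_iff, Finset.mem_insert, Finset.mem_biUnion]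
    by_cases hz : z = a
    · exact Or.inl hz
    · obtain ⟨n, ⟨hnL, han, hzn⟩, -⟩ := hL.exists_unique_line a z (Ne.symm hz)
      exact Or.inr ⟨n, Finset.mem_filter.mpr ⟨hnL, han⟩, Finset.mem_erase.mpr ⟨hz, hzn⟩⟩
  have hanot : a ∉ F.biUnion fun n => n.erase a := by
    simp [Finset.mem_biUnion]
  have hcard : ∀ n ∈ F, (n.erase a).card = q := by
    intro n hn
    have m := Finset.mem_filter.mp hn
    rw [Finset.card_erase_of_mem m.2, hL.card_line n m.1]
    omega
  have hFcard : F.card = q + 1 := pencil_card hL a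
  calc Fintype.card P = (insert a (F.biUnion fun n => n.erase a)).card := by
        rw [← huniv, Finset.card_univ]
    _ = (F.biUnion fun n => n.erase a).card + 1 := Finset.card_insert_of_notMem hanot
    _ = (∑ n ∈ F, (n.erase a).card) + 1 := by rw [Finset.card_biUnion hdisj]
    _ = (∑ n ∈ F, q) + 1 := by rw [Finset.sum_congr rfl hcard]
    _ = (q + 1) * q + 1 := by rw [Finset.sum_const, hFcard]; ring
    _ = q ^ 2 + q + 1 := by ring

variable {B : Finset (Finset P)}

lemma ovals_eq_of_two_pts (hB : IsProjectiveBundle q L B) {o₁ o₂ : Finset P} (h₁ : o₁ ∈ B)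
    (h₂ : o₂ ∈ B) {x y : P} (hxy : x ≠ y) (hx1 : x ∈ o₁) (hy1 : y ∈ o₁) (hx2 : x ∈ o₂)
    (hy2 : y ∈ o₂) : o₁ = o₂ := by
  by_contra hne
  have h1 := hB.2.2 o₁ h₁ o₂ h₂ hne
  have h2 : ({x, y} : Finset P) ⊆ o₁ ∩ o₂ := by
    intro z hz
    simp only [Finset.mem_insert, Finset.mem_singleton] at hz
    rcases hz with rfl | rfl <;> simp [Finset.mem_inter, *]
  have h3 := Finset.card_le_card h2
  rw [Finset.card_insert_of_notMem (by simp [hxy]), Finset.card_singleton] at h3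
  omega

lemma bundle_point_le (hB : IsProjectiveBundle q L B) {x : P} {o : Finset P} (ho : o ∈ B)
    (hx : x ∉ o) : (B.filter fun o' => x ∈ o').card ≤ q + 1 := by
  have hcard : ∀ o' ∈ B.filter fun o' => x ∈ o', onept (o' ∩ o) x ∈ o' ∩ o := by
    intro o' ho'
    have m := Finset.mem_filter.mp ho'
    have hne : o' ≠ o := fun h => hx (h ▸ m.2)
    have h1 : (o' ∩ o).card = 1 := hB.2.2 o' m.1 o ho hne
    exact onept_mem (Finset.card_pos.mp (by omega)) x
  rw [← (hB.2.1 o ho).1]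
  apply Finset.card_le_card_of_injOn (fun o' => onept (o' ∩ o) x)
  · intro o' ho'
    exact (Finset.mem_inter.mp (hcard o' ho')).2
  · intro o₁ h₁ o₂ h₂ heq
    simp only [Finset.mem_coe] at h₁ h₂
    have c₁ := Finset.mem_inter.mp (hcard o₁ h₁)
    have c₂ := Finset.mem_inter.mp (hcard o₂ h₂)
    have m₁ := Finset.mem_filter.mp h₁
    have m₂ := Finset.mem_filter.mp h₂
    have hpx : onept (o₁ ∩ o) x ≠ x := fun h => hx (h ▸ c₁.2)
    have heq' : onept (o₁ ∩ o) x = onept (o₂ ∩ o) x := heq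
    exact ovals_eq_of_two_pts hB m₁.1 m₂.1 hpx c₁.1 m₁.2 (heq' ▸ c₂.1) m₂.2

lemma exists_oval_avoiding (hL : IsProjectivePlane q L) (hB : IsProjectiveBundle q L B)
    (hq : 2 ≤ q) (x : P) : ∃ o ∈ B, x ∉ o := by
  by_contra hc
  push_neg at hc
  have hdisj : ∀ o₁ ∈ B, ∀ o₂ ∈ B, o₁ ≠ o₂ → Disjoint (o₁.erase x) (o₂.erase x) := by
    intro o₁ h₁ o₂ h₂ hne
    refine Finset.disjoint_left.mpr ?_
    intro z hz₁ hz₂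
    obtain ⟨hzx, hz₁⟩ := Finset.mem_erase.mp hz₁
    obtain ⟨-, hz₂⟩ := Finset.mem_erase.mp hz₂
    exact hne (ovals_eq_of_two_pts hB h₁ h₂ hzx hz₁ (hc o₁ h₁) hz₂ (hc o₂ h₂))
  have hle := Finset.card_le_univ (B.biUnion fun o => o.erase x)
  rw [Finset.card_biUnion hdisj, card_points hL] at hle
  have hsum : ∑ o ∈ B, (o.erase x).card = (q ^ 2 + q + 1) * q := by
    rw [Finset.sum_congr rfl fun o ho => ?_, Finset.sum_const, hB.1, smul_eq_mul]
    rw [Finset.card_erase_of_mem (hc o ho), (hB.2.1 o ho).1]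
    omega
  rw [hsum] at hle
  nlinarith

lemma bundle_point_card (hL : IsProjectivePlane q L) (hB : IsProjectiveBundle q L B)
    (hq : 2 ≤ q) (x : P) : (B.filter fun o => x ∈ o).card = q + 1 := by
  have hle : ∀ y : P, (B.filter fun o => y ∈ o).card ≤ q + 1 := by
    intro y
    obtain ⟨o, ho, hyo⟩ := exists_oval_avoiding hL hB hq y
    exact bundle_point_le hB ho hyo
  have hsum : ∑ y : P, (B.filter fun o => y ∈ o).card = ∑ y : P, (q + 1) := by
    have h1 : ∀ y : P, (B.filter fun o => y ∈ o).card = ∑ o ∈ B, if y ∈ o then 1 else 0 := by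
      intro y; rw [Finset.card_filter]
    calc ∑ y : P, (B.filter fun o => y ∈ o).card
        = ∑ y : P, ∑ o ∈ B, if y ∈ o then 1 else 0 := by simp only [h1]
      _ = ∑ o ∈ B, ∑ y : P, if y ∈ o then 1 else 0 := Finset.sum_comm
      _ = ∑ o ∈ B, o.card := by
          refine Finset.sum_congr rfl fun o ho => ?_
          rw [Finset.sum_ite_mem, Finset.univ_inter, Finset.sum_const, smul_eq_mul, mul_one]
      _ = ∑ o ∈ B, (q + 1) := Finset.sum_congr rfl fun o ho => (hB.2.1 o ho).1
      _ = (q ^ 2 + q + 1) * (q + 1) := by rw [Finset.sum_const, hB.1, smul_eq_mul]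
      _ = ∑ y : P, (q + 1) := by
          rw [Finset.sum_const, Finset.card_univ, card_points hL, smul_eq_mul]
  have := (Finset.sum_eq_sum_iff_of_le fun y _ => hle y).mp hsum
  exact this x (Finset.mem_univ x)

lemma bundle_exists_unique_oval (hL : IsProjectivePlane q L) (hB : IsProjectiveBundle q L B)
    (hq : 2 ≤ q) {x y : P} (hxy : x ≠ y) : ∃! o, o ∈ B ∧ x ∈ o ∧ y ∈ o := by
  have hdisj : ∀ o₁ ∈ B.filter (x ∈ ·), ∀ o₂ ∈ B.filter (x ∈ ·), o₁ ≠ o₂ →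
      Disjoint (o₁.erase x) (o₂.erase x) := by
    intro o₁ h₁ o₂ h₂ hne
    have m₁ := Finset.mem_filter.mp h₁
    have m₂ := Finset.mem_filter.mp h₂
    refine Finset.disjoint_left.mpr ?_
    intro z hz₁ hz₂
    obtain ⟨hzx, hz₁⟩ := Finset.mem_erase.mp hz₁
    obtain ⟨-, hz₂⟩ := Finset.mem_erase.mp hz₂
    exact hne (ovals_eq_of_two_pts hB m₁.1 m₂.1 hzx hz₁ m₁.2 hz₂ m₂.2)
  have hsub : ((B.filter (x ∈ ·)).biUnion fun o => o.erase x) ⊆ Finset.univ.erase x := by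
    intro z hz
    obtain ⟨o, ho, hzo⟩ := Finset.mem_biUnion.mp hz
    exact Finset.mem_erase.mpr ⟨(Finset.mem_erase.mp hzo).1, Finset.mem_univ z⟩
  have hcard : ((B.filter (x ∈ ·)).biUnion fun o => o.erase x).card = (Finset.univ.erase x).card := by
    rw [Finset.card_biUnion hdisj, Finset.card_erase_of_mem (Finset.mem_univ x),
      Finset.card_univ, card_points hL]
    have hterm : ∀ o ∈ B.filter (x ∈ ·), (o.erase x).card = q := by
      intro o ho
      have m := Finset.mem_filter.mp ho
      rw [Finset.card_erase_of_mem m.2, (hB.2.1 o m.1).1]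
      omega
    rw [Finset.sum_congr rfl hterm, Finset.sum_const, bundle_point_card hL hB hq x, smul_eq_mul]
    have h2 : (q + 1) * q = q ^ 2 + q := by ring
    omega
  have heq := Finset.eq_of_subset_of_card_le hsub (le_of_eq hcard.symm)
  have hy : y ∈ (B.filter (x ∈ ·)).biUnion fun o => o.erase x := by
    rw [heq]
    exact Finset.mem_erase.mpr ⟨hxy.symm, Finset.mem_univ y⟩
  obtain ⟨o, ho, hyo⟩ := Finset.mem_biUnion.mp hy
  have m := Finset.mem_filter.mp ho
  refine ⟨o, ⟨m.1, m.2, (Finset.mem_erase.mp hyo).2⟩, ?_⟩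
  intro o' ⟨ho', hxo', hyo'⟩
  exact ovals_eq_of_two_pts hB ho' m.1 hxy hxo' hyo' m.2 (Finset.mem_erase.mp hyo).2

lemma card_filter_unique {α : Type*} [DecidableEq α] {s : Finset α} {p : α → Prop}
    [DecidablePred p] (h : ∃! a, a ∈ s ∧ p a) : (s.filter p).card = 1 := by
  obtain ⟨a, ⟨has, hpa⟩, hu⟩ := h
  rw [Finset.card_eq_one]
  refine ⟨a, ?_⟩
  ext b
  simp only [Finset.mem_filter, Finset.mem_singleton]
  constructor
  · intro ⟨hbs, hpb⟩; exact hu b ⟨hbs, hpb⟩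
  · rintro rfl; exact ⟨has, hpa⟩

variable {ℓ : Finset P}

lemma tangent_at_card (hL : IsProjectivePlane q L) (hB : IsProjectiveBundle q L B)
    (hq : 2 ≤ q) (hℓ : ℓ ∈ L) {R : P} (hR : R ∈ ℓ) :
    (B.filter fun o => o ∩ ℓ = {R}).card = 1 := by
  classical
  set A := B.filter fun o => R ∈ o with hA
  have hAcard : A.card = q + 1 := bundle_point_card hL hB hq R
  -- secants through R
  have hsec : (A.filter fun o => ¬ (o ∩ ℓ = {R})).card = q := by
    have hmem : ∀ o ∈ A.filter fun o => ¬ (o ∩ ℓ = {R}), ((o ∩ ℓ).erase R).Nonempty := by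
      intro o ho
      obtain ⟨hoA, hne⟩ := Finset.mem_filter.mp ho
      obtain ⟨hoB, hRo⟩ := Finset.mem_filter.mp hoA
      rw [Finset.nonempty_iff_ne_empty]
      intro hemp
      rcases (Finset.erase_eq_empty_iff _ _).mp hemp with h | h
      · exact (Finset.notMem_empty R) (h ▸ Finset.mem_inter.mpr ⟨hRo, hR⟩)
      · exact hne h
    have : (A.filter fun o => ¬ (o ∩ ℓ = {R})).card = (ℓ.erase R).card := by
      apply Finset.card_bij (fun o ho => onept ((o ∩ ℓ).erase R) R)
      · intro o ho
        have hmemo := onept_mem (hmem o ho) R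
        obtain ⟨hne, hin⟩ := Finset.mem_erase.mp hmemo
        exact Finset.mem_erase.mpr ⟨hne, (Finset.mem_inter.mp hin).2⟩
      · intro o₁ h₁ o₂ h₂ heq
        have c₁ := Finset.mem_erase.mp (onept_mem (hmem o₁ h₁) R)
        have c₂ := Finset.mem_erase.mp (onept_mem (hmem o₂ h₂) R)
        have m₁ := Finset.mem_filter.mp (Finset.mem_filter.mp h₁).1
        have m₂ := Finset.mem_filter.mp (Finset.mem_filter.mp h₂).1
        have heq' : onept ((o₁ ∩ ℓ).erase R) R = onept ((o₂ ∩ ℓ).erase R) R := heq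
        refine ovals_eq_of_two_pts hB m₁.1 m₂.1 (Ne.symm c₁.1) m₁.2 (Finset.mem_inter.mp c₁.2).1
          m₂.2 ?_
        rw [heq']
        exact (Finset.mem_inter.mp c₂.2).1
      · intro S hS
        obtain ⟨hSR, hSℓ⟩ := Finset.mem_erase.mp hS
        have hRS : R ≠ S := Ne.symm hSR
        obtain ⟨o, ⟨hoB, hRo, hSo⟩, -⟩ := bundle_exists_unique_oval hL hB hq hRS
        have hoA : o ∈ A := Finset.mem_filter.mpr ⟨hoB, hRo⟩
        have hne : ¬ (o ∩ ℓ = {R}) := by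
          intro h
          have : S ∈ ({R} : Finset P) := h ▸ Finset.mem_inter.mpr ⟨hSo, hSℓ⟩
          exact hSR (Finset.mem_singleton.mp this)
        have ho : o ∈ A.filter fun o => ¬ (o ∩ ℓ = {R}) := Finset.mem_filter.mpr ⟨hoA, hne⟩
        refine ⟨o, ho, ?_⟩
        -- (o ∩ ℓ).erase R = {S}
        have hsub : (o ∩ ℓ).erase R ⊆ {S} := by
          intro z hz
          obtain ⟨hzR, hzo⟩ := Finset.mem_erase.mp hz
          by_contra hzS
          rw [Finset.mem_singleton] at hzS
          have h3 : ({R, S, z} : Finset P) ⊆ o ∩ ℓ := by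
            intro w hw
            simp only [Finset.mem_insert, Finset.mem_singleton] at hw
            rcases hw with rfl | rfl | rfl
            · exact Finset.mem_inter.mpr ⟨hRo, hR⟩
            · exact Finset.mem_inter.mpr ⟨hSo, hSℓ⟩
            · exact hzo
          have hc3 : ({R, S, z} : Finset P).card = 3 := by
            rw [Finset.card_insert_of_notMem (by simp [hRS, Ne.symm hzR]),
              Finset.card_insert_of_notMem (by simp [Ne.symm hzS])]
            simp
          have := Finset.card_le_card h3
          have h2 := ((hB.2.1 o hoB).2) ℓ hℓ
          rw [Finset.inter_comm] at h2
          omega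
        have := onept_mem (hmem o ho) R
        have := hsub this
        exact Finset.mem_singleton.mp this
    rw [this, Finset.card_erase_of_mem hR, hL.card_line ℓ hℓ]
    omega
  have hsplit := Finset.card_filter_add_card_filter_not
    (s := A) (p := fun o => o ∩ ℓ = {R})
  have hAeq : B.filter (fun o => o ∩ ℓ = {R}) = A.filter fun o => o ∩ ℓ = {R} := by
    rw [hA, Finset.filter_filter]
    apply Finset.filter_congr
    intro o hoB
    constructor
    · intro h
      have : R ∈ o ∩ ℓ := h ▸ Finset.mem_singleton_self R
      exact ⟨(Finset.mem_inter.mp this).1, h⟩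
    · intro h; exact h.2
  rw [hAeq]
  omega

lemma eq_singleton_onept {α : Type*} {s : Finset α} (h : s.card = 1) (d : α) :
    s = {onept s d} := by
  obtain ⟨a, rfl⟩ := Finset.card_eq_one.mp h
  have := onept_mem (Finset.singleton_nonempty a) d
  rw [Finset.mem_singleton] at this
  rw [this]

lemma singleton_of_card_one_mem {α : Type*} {s : Finset α} {a : α} (h : s.card = 1)
    (ha : a ∈ s) : s = {a} := by
  obtain ⟨b, rfl⟩ := Finset.card_eq_one.mp h
  rw [Finset.mem_singleton] at ha
  rw [ha]

lemma sum_card_filter_mem {α : Type*} [DecidableEq α] (s : Finset α) (F : Finset (Finset α)) :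
    ∑ x ∈ s, (F.filter fun o => x ∈ o).card = ∑ o ∈ F, (s.filter fun x => x ∈ o).card := by
  simp only [Finset.card_filter]
  exact Finset.sum_comm

lemma tangent_unique (hL : IsProjectivePlane q L) (hB : IsProjectiveBundle q L B)
    (hq : 2 ≤ q) (hℓ : ℓ ∈ L) {o₁ o₂ : Finset P} (h₁ : o₁ ∈ B) (h₂ : o₂ ∈ B) {R : P}
    (hR : R ∈ ℓ) (e₁ : o₁ ∩ ℓ = {R}) (e₂ : o₂ ∩ ℓ = {R}) : o₁ = o₂ := by
  have hc := tangent_at_card hL hB hq hℓ hR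
  have m₁ : o₁ ∈ B.filter fun o => o ∩ ℓ = {R} := Finset.mem_filter.mpr ⟨h₁, e₁⟩
  have m₂ : o₂ ∈ B.filter fun o => o ∩ ℓ = {R} := Finset.mem_filter.mpr ⟨h₂, e₂⟩
  exact Finset.card_le_one.mp (le_of_eq hc) o₁ m₁ o₂ m₂

lemma tangent_set_card (hL : IsProjectivePlane q L) (hB : IsProjectiveBundle q L B)
    (hq : 2 ≤ q) (hℓ : ℓ ∈ L) :
    (B.filter fun o => (o ∩ ℓ).card = 1).card = q + 1 := by
  obtain ⟨d, hd⟩ : ℓ.Nonempty := by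
    apply Finset.card_pos.mp
    rw [hL.card_line ℓ hℓ]
    omega
  rw [← hL.card_line ℓ hℓ]
  apply Finset.card_bij (fun o ho => onept (o ∩ ℓ) d)
  · intro o ho
    have hone := (Finset.mem_filter.mp ho).2
    have := onept_mem (Finset.card_pos.mp (by omega : 0 < (o ∩ ℓ).card)) d
    exact (Finset.mem_inter.mp this).2
  · intro o₁ ho₁ o₂ ho₂ heq
    have t₁ := (Finset.mem_filter.mp ho₁).2
    have t₂ := (Finset.mem_filter.mp ho₂).2
    have e₁ := eq_singleton_onept t₁ d
    have e₂ := eq_singleton_onept t₂ d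
    have heq' : onept (o₁ ∩ ℓ) d = onept (o₂ ∩ ℓ) d := heq
    have hRℓ : onept (o₁ ∩ ℓ) d ∈ ℓ := by
      have := onept_mem (Finset.card_pos.mp (by omega : 0 < (o₁ ∩ ℓ).card)) d
      exact (Finset.mem_inter.mp this).2
    exact tangent_unique hL hB hq hℓ (Finset.mem_filter.mp ho₁).1 (Finset.mem_filter.mp ho₂).1
      hRℓ e₁ (by rw [heq']; exact heq' ▸ e₂)
  · intro R hR
    obtain ⟨o, hoeq⟩ := Finset.card_eq_one.mp (tangent_at_card hL hB hq hℓ hR)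
    have ho : o ∈ B.filter fun o => o ∩ ℓ = {R} := hoeq ▸ Finset.mem_singleton_self o
    have m := Finset.mem_filter.mp ho
    have hT : o ∈ B.filter fun o => (o ∩ ℓ).card = 1 :=
      Finset.mem_filter.mpr ⟨m.1, by rw [m.2]; simp⟩
    refine ⟨o, hT, ?_⟩
    have hcard1 : (o ∩ ℓ).card = 1 := by rw [m.2]; simp
    have := (eq_singleton_onept hcard1 d).symm.trans m.2
    exact Finset.singleton_injective this

lemma sum_inter_card (hL : IsProjectivePlane q L) (hB : IsProjectiveBundle q L B)
    (hq : 2 ≤ q) (hℓ : ℓ ∈ L) {Q : P} (hQ : Q ∉ ℓ) :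
    ∑ o ∈ B.filter (fun o => Q ∈ o), (o ∩ ℓ).card = q + 1 := by
  have h1 : ∀ o ∈ B.filter (fun o => Q ∈ o), (o ∩ ℓ).card = (ℓ.filter fun x => x ∈ o).card := by
    intro o ho
    congr 1
    ext z
    simp only [Finset.mem_inter, Finset.mem_filter]
    tauto
  rw [Finset.sum_congr rfl h1, ← sum_card_filter_mem]
  have h2 : ∀ R ∈ ℓ, ((B.filter (fun o => Q ∈ o)).filter fun o => R ∈ o).card = 1 := by
    intro R hR
    have hQR : Q ≠ R := fun h => hQ (h ▸ hR)
    obtain ⟨o, ⟨hoB, hQo, hRo⟩, hu⟩ := bundle_exists_unique_oval hL hB hq hQR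
    apply card_filter_unique
    refine ⟨o, ⟨Finset.mem_filter.mpr ⟨hoB, hQo⟩, hRo⟩, ?_⟩
    intro o' ⟨ho', hRo'⟩
    have m := Finset.mem_filter.mp ho'
    exact hu o' ⟨m.1, m.2, hRo'⟩
  rw [Finset.sum_congr rfl h2, Finset.sum_const, hL.card_line ℓ hℓ, smul_eq_mul, mul_one]

lemma tangent_parity (hL : IsProjectivePlane q L) (hB : IsProjectiveBundle q L B)
    (hq : 2 ≤ q) (hodd : Odd q) (hℓ : ℓ ∈ L) {Q : P} (hQ : Q ∉ ℓ) :
    Even (B.filter fun o => Q ∈ o ∧ (o ∩ ℓ).card = 1).card := by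
  classical
  have hsum := sum_inter_card hL hB hq hℓ hQ
  set BQ := B.filter (fun o => Q ∈ o) with hBQ
  have hsplit := Finset.sum_filter_add_sum_filter_not BQ (fun o => (o ∩ ℓ).card = 1)
    (fun o => (o ∩ ℓ).card)
  have hfil : B.filter (fun o => Q ∈ o ∧ (o ∩ ℓ).card = 1)
      = BQ.filter (fun o => (o ∩ ℓ).card = 1) := by
    rw [hBQ, Finset.filter_filter]
  have hT : ∑ o ∈ BQ.filter (fun o => (o ∩ ℓ).card = 1), (o ∩ ℓ).card
      = (BQ.filter (fun o => (o ∩ ℓ).card = 1)).card := by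
    rw [Finset.card_eq_sum_ones]
    refine Finset.sum_congr rfl fun o ho => (Finset.mem_filter.mp ho).2
  have hEvenRest : Even (∑ o ∈ BQ.filter (fun o => ¬ (o ∩ ℓ).card = 1), (o ∩ ℓ).card) := by
    apply Finset.even_sum
    intro o ho
    have m := Finset.mem_filter.mp ho
    have mB := Finset.mem_filter.mp m.1
    have hle := (hB.2.1 o mB.1).2 ℓ hℓ
    rw [Finset.inter_comm] at hle
    have := m.2
    interval_cases h : (o ∩ ℓ).card
    · exact Even.zero
    · exact absurd rfl this
    · exact even_two
  rw [hfil]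
  have hq1 : Even (q + 1) := by
    rcases hodd with ⟨k, hk⟩
    exact ⟨k + 1, by omega⟩
  rw [hT] at hsplit
  rw [← hsplit] at hsum
  rcases hEvenRest with ⟨m, hm⟩
  rcases hq1 with ⟨n, hn⟩
  exact ⟨n - m, by omega⟩

lemma filter_tangent_through (Q : P) :
    B.filter (fun o => Q ∈ o ∧ (o ∩ ℓ).card = 1)
      = (B.filter fun o => (o ∩ ℓ).card = 1).filter (fun o => Q ∈ o) := by
  rw [Finset.filter_filter]
  apply Finset.filter_congr
  intro o _
  tauto

lemma sum_tangent (hL : IsProjectivePlane q L) (hB : IsProjectiveBundle q L B)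
    (hq : 2 ≤ q) (hℓ : ℓ ∈ L) :
    ∑ Q ∈ Finset.univ \ ℓ, (B.filter fun o => Q ∈ o ∧ (o ∩ ℓ).card = 1).card
      = (q + 1) * q := by
  classical
  set T := B.filter fun o => (o ∩ ℓ).card = 1 with hTdef
  have h1 : ∀ Q ∈ Finset.univ \ ℓ, (B.filter fun o => Q ∈ o ∧ (o ∩ ℓ).card = 1).card
      = (T.filter fun o => Q ∈ o).card := by
    intro Q _
    rw [filter_tangent_through]
  rw [Finset.sum_congr rfl h1, sum_card_filter_mem]
  have h2 : ∀ o ∈ T, ((Finset.univ \ ℓ).filter fun x => x ∈ o).card = q := by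
    intro o ho
    have m := Finset.mem_filter.mp ho
    have he : (Finset.univ \ ℓ).filter (fun x => x ∈ o) = o \ ℓ := by
      ext z
      simp only [Finset.mem_filter, Finset.mem_sdiff, Finset.mem_univ, true_and]
      tauto
    have hcc := Finset.card_sdiff_add_card_inter o ℓ
    rw [he]
    rw [(hB.2.1 o m.1).1] at hcc
    omega
  rw [Finset.sum_congr rfl h2, Finset.sum_const, smul_eq_mul,
    tangent_set_card hL hB hq hℓ]

lemma sum_tangent_pairs (hL : IsProjectivePlane q L) (hB : IsProjectiveBundle q L B)
    (hq : 2 ≤ q) (hℓ : ℓ ∈ L) :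
    ∑ Q ∈ Finset.univ \ ℓ, ((B.filter fun o => Q ∈ o ∧ (o ∩ ℓ).card = 1).card *
      ((B.filter fun o => Q ∈ o ∧ (o ∩ ℓ).card = 1).card - 1))
      = (q + 1) * q := by
  classical
  set T := B.filter fun o => (o ∩ ℓ).card = 1 with hTdef
  have h1 : ∀ Q ∈ Finset.univ \ ℓ, (B.filter fun o => Q ∈ o ∧ (o ∩ ℓ).card = 1).card *
      ((B.filter fun o => Q ∈ o ∧ (o ∩ ℓ).card = 1).card - 1)
      = (T.offDiag.filter fun p => Q ∈ p.1 ∧ Q ∈ p.2).card := by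
    intro Q _
    rw [filter_tangent_through]
    have hoff : (T.filter fun o => Q ∈ o).offDiag
        = T.offDiag.filter fun p => Q ∈ p.1 ∧ Q ∈ p.2 := by
      ext ⟨a, b⟩
      simp only [Finset.mem_offDiag, Finset.mem_filter]
      tauto
    rw [← hoff, Finset.offDiag_card, Nat.mul_sub, mul_one]
  rw [Finset.sum_congr rfl h1]
  have hswap : ∑ Q ∈ Finset.univ \ ℓ, (T.offDiag.filter fun p => Q ∈ p.1 ∧ Q ∈ p.2).card
      = ∑ p ∈ T.offDiag, ((Finset.univ \ ℓ).filter fun Q => Q ∈ p.1 ∧ Q ∈ p.2).card := by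
    simp only [Finset.card_filter]
    exact Finset.sum_comm
  rw [hswap]
  have h2 : ∀ p ∈ T.offDiag, ((Finset.univ \ ℓ).filter fun Q => Q ∈ p.1 ∧ Q ∈ p.2).card = 1 := by
    rintro ⟨o₁, o₂⟩ hp
    obtain ⟨h₁, h₂, hne⟩ := Finset.mem_offDiag.mp hp
    have m₁ := Finset.mem_filter.mp h₁
    have m₂ := Finset.mem_filter.mp h₂
    have hint : (o₁ ∩ o₂).card = 1 := hB.2.2 o₁ m₁.1 o₂ m₂.1 hne
    obtain ⟨x, hx⟩ := Finset.card_eq_one.mp hint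
    have hxo₁ : x ∈ o₁ := (Finset.mem_inter.mp (hx ▸ Finset.mem_singleton_self x)).1
    have hxo₂ : x ∈ o₂ := (Finset.mem_inter.mp (hx ▸ Finset.mem_singleton_self x)).2
    have hxℓ : x ∉ ℓ := by
      intro hxl
      have e₁ : o₁ ∩ ℓ = {x} := singleton_of_card_one_mem m₁.2 (Finset.mem_inter.mpr ⟨hxo₁, hxl⟩)
      have e₂ : o₂ ∩ ℓ = {x} := singleton_of_card_one_mem m₂.2 (Finset.mem_inter.mpr ⟨hxo₂, hxl⟩)
      exact hne (tangent_unique hL hB hq hℓ m₁.1 m₂.1 hxl e₁ e₂)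
    rw [Finset.card_eq_one]
    refine ⟨x, ?_⟩
    ext z
    simp only [Finset.mem_filter, Finset.mem_sdiff, Finset.mem_univ, true_and,
      Finset.mem_singleton]
    constructor
    · intro ⟨hzℓ, hz₁, hz₂⟩
      have : z ∈ o₁ ∩ o₂ := Finset.mem_inter.mpr ⟨hz₁, hz₂⟩
      rw [hx, Finset.mem_singleton] at this
      exact this
    · rintro rfl
      exact ⟨hxℓ, hxo₁, hxo₂⟩
  rw [Finset.sum_congr rfl h2, Finset.sum_const, smul_eq_mul, mul_one, Finset.offDiag_card,
    tangent_set_card hL hB hq hℓ]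
  have : (q + 1) * (q + 1) = (q + 1) * q + (q + 1) := by ring
  omega

end Aux

/-- For `q ≥ 2` odd, a projective bundle `B` and a line `ℓ`, every point not on
`ℓ` lies on exactly 0 or exactly 2 ovals of `B` tangent to `ℓ`. -/
theorem statement_9 (q : ℕ) (hq : 2 ≤ q) (hodd : Odd q) (P : Type) [Fintype P] [DecidableEq P]
    (L : Finset (Finset P)) (hL : IsProjectivePlane q L)
    (B : Finset (Finset P)) (hB : IsProjectiveBundle q L B)
    (ℓ : Finset P) (hℓ : ℓ ∈ L) (Q : P) (hQ : Q ∉ ℓ) :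
    (B.filter fun o => Q ∈ o ∧ (o ∩ ℓ).card = 1).card = 0 ∨
    (B.filter fun o => Q ∈ o ∧ (o ∩ ℓ).card = 1).card = 2 := by
  classical
  set t : P → ℕ := fun R => (B.filter fun o => R ∈ o ∧ (o ∩ ℓ).card = 1).card with ht
  have hle : ∀ R ∈ Finset.univ \ ℓ, t R ≤ t R * (t R - 1) := by
    intro R hR
    have hRℓ : R ∉ ℓ := (Finset.mem_sdiff.mp hR).2
    have hev := tangent_parity hL hB hq hodd hℓ hRℓ
    rcases Nat.eq_zero_or_pos (t R) with h0 | hpos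
    · omega
    · have h2 : 2 ≤ t R := by
        rcases hev with ⟨k, hk⟩
        have : t R = k + k := hk
        omega
      calc t R = t R * 1 := (mul_one _).symm
        _ ≤ t R * (t R - 1) := Nat.mul_le_mul_left _ (by omega)
  have hsums : ∑ R ∈ Finset.univ \ ℓ, t R = ∑ R ∈ Finset.univ \ ℓ, t R * (t R - 1) := by
    rw [sum_tangent hL hB hq hℓ, sum_tangent_pairs hL hB hq hℓ]
  have heach := (Finset.sum_eq_sum_iff_of_le hle).mp hsums
  have hQmem : Q ∈ Finset.univ \ ℓ := Finset.mem_sdiff.mpr ⟨Finset.mem_univ Q, hQ⟩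
  have hQeq := heach Q hQmem
  rcases Nat.eq_zero_or_pos (t Q) with h0 | hpos
  · exact Or.inl h0
  · right
    have h1 : t Q * 1 = t Q * (t Q - 1) := by rw [mul_one]; exact hQeq
    have h2 := Nat.eq_of_mul_eq_mul_left hpos h1
    show t Q = 2
    omega
end

section
/- Let q ≥ 2 be odd, let (P, L) be a finite projective plane of order q, and let B be a projective bundle. Let A be the P × L incidence matrix over F₂ (entry 1 iff the point lies on the line) and let M be the P × B incidence matrix over F₂ (entry 1 iff the point lies on the oval). Then the F₂-rank of the block matrix H = (A | M) equals q²+q; equivalently, the right kernel of H, i.e., the space of vectors (x, y) with x : L → F₂ and y : B → F₂ such that for every point p, Σ_{ℓ ∋ p} x(ℓ) + Σ_{o ∋ p} y(o) = 0, has F₂-dimension q²+q+2. -/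
namespace Stmt11

variable {q : ℕ} {P : Type} [DecidableEq P] {L : Finset (Finset P)}

instance instMem : Membership P {ℓ // ℓ ∈ L} := ⟨fun ℓ p => p ∈ ℓ.1⟩

/-- No line contains three of the four nondegeneracy points. -/
lemma three_notMem {a b c d x y z : P}
    (hx : x ∈ ({a,b,c,d} : Finset P)) (hy : y ∈ ({a,b,c,d} : Finset P))
    (hz : z ∈ ({a,b,c,d} : Finset P)) (hxy : x ≠ y) (hxz : x ≠ z) (hyz : y ≠ z)
    (hcol : ∀ ℓ ∈ L, (ℓ ∩ ({a, b, c, d} : Finset P)).card ≤ 2)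
    {ℓ : Finset P} (hℓ : ℓ ∈ L) (hxl : x ∈ ℓ) (hyl : y ∈ ℓ) (hzl : z ∈ ℓ) : False := by
  have hsub : ({x, y, z} : Finset P) ⊆ ℓ ∩ ({a,b,c,d} : Finset P) := by
    intro t ht
    simp only [Finset.mem_insert, Finset.mem_singleton] at ht
    rcases ht with rfl | rfl | rfl <;> simp_all [Finset.mem_inter]
  have h3 : ({x, y, z} : Finset P).card = 3 := by
    rw [Finset.card_insert_of_notMem (by simp [hxy, hxz]),
      Finset.card_insert_of_notMem (by simp [hyz]), Finset.card_singleton]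
  have := (Finset.card_le_card hsub).trans (hcol ℓ hℓ)
  omega

lemma nd (h : IsProjectivePlane q L) : Configuration.Nondegenerate P {ℓ // ℓ ∈ L} := by
  obtain ⟨a, b, c, d, hab, hac, had, hbc, hbd, hcd, hcol⟩ := h.nondeg
  have ha : a ∈ ({a,b,c,d} : Finset P) := by simp
  have hb : b ∈ ({a,b,c,d} : Finset P) := by simp
  have hc : c ∈ ({a,b,c,d} : Finset P) := by simp
  have hd : d ∈ ({a,b,c,d} : Finset P) := by simp
  constructor
  · intro l
    by_contra hcon
    push_neg at hcon
    exact three_notMem ha hb hc hab hac hbc hcol l.2 (hcon a) (hcon b) (hcon c)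
  · intro p
    obtain ⟨lab, hlab⟩ := (h.exists_unique_line a b hab).exists
    obtain ⟨lcd, hlcd⟩ := (h.exists_unique_line c d hcd).exists
    obtain ⟨lac, hlac⟩ := (h.exists_unique_line a c hac).exists
    obtain ⟨lbd, hlbd⟩ := (h.exists_unique_line b d hbd).exists
    by_cases h1 : p ∈ lab; swap
    · exact ⟨⟨lab, hlab.1⟩, h1⟩
    by_cases h2 : p ∈ lac; swap
    · exact ⟨⟨lac, hlac.1⟩, h2⟩
    by_cases h3 : p ∈ lcd; swap
    · exact ⟨⟨lcd, hlcd.1⟩, h3⟩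
    by_cases h4 : p ∈ lbd; swap
    · exact ⟨⟨lbd, hlbd.1⟩, h4⟩
    exfalso
    have hpa : p = a := by
      by_contra hpa
      obtain ⟨ℓ, -, hu⟩ := h.exists_unique_line p a hpa
      have heq : lab = lac :=
        (hu lab ⟨hlab.1, h1, hlab.2.1⟩).trans (hu lac ⟨hlac.1, h2, hlac.2.1⟩).symm
      exact three_notMem ha hc hb hac hab.symm.symm hbc.symm hcol hlac.1 hlac.2.1 hlac.2.2
        (heq ▸ hlab.2.2)
    have hpd : p = d := by
      by_contra hpd
      obtain ⟨ℓ, -, hu⟩ := h.exists_unique_line p d hpd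
      have heq : lcd = lbd :=
        (hu lcd ⟨hlcd.1, h3, hlcd.2.2⟩).trans (hu lbd ⟨hlbd.1, h4, hlbd.2.2⟩).symm
      exact three_notMem hb hd hc hbd hbc hcd.symm hcol hlbd.1 hlbd.2.1 hlbd.2.2
        (heq ▸ hlcd.2.1)
    exact had (hpa ▸ hpd ▸ rfl)
  · intro p₁ p₂ l₁ l₂ h₁ h₂ h₃ h₄
    by_contra hcon
    push_neg at hcon
    obtain ⟨hp, hl⟩ := hcon
    obtain ⟨ℓ, -, huniq⟩ := h.exists_unique_line p₁ p₂ hp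
    exact hl (Subtype.ext ((huniq l₁.1 ⟨l₁.2, h₁, h₂⟩).trans (huniq l₂.1 ⟨l₂.2, h₃, h₄⟩).symm))

lemma exists_config (h : IsProjectivePlane q L) :
    ∃ (p₁ p₂ p₃ : P) (l₁ l₂ l₃ : {ℓ // ℓ ∈ L}),
      p₁ ∉ l₂ ∧ p₁ ∉ l₃ ∧ p₂ ∉ l₁ ∧ p₂ ∈ l₂ ∧ p₂ ∈ l₃ ∧ p₃ ∉ l₁ ∧ p₃ ∈ l₂ ∧ p₃ ∉ l₃ := by
  obtain ⟨a, b, c, d, hab, hac, had, hbc, hbd, hcd, hcol⟩ := h.nondeg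
  have ha : a ∈ ({a,b,c,d} : Finset P) := by simp
  have hb : b ∈ ({a,b,c,d} : Finset P) := by simp
  have hc : c ∈ ({a,b,c,d} : Finset P) := by simp
  have hd : d ∈ ({a,b,c,d} : Finset P) := by simp
  obtain ⟨lbc, hlbc⟩ := (h.exists_unique_line b c hbc).exists
  obtain ⟨lbd, hlbd⟩ := (h.exists_unique_line b d hbd).exists
  obtain ⟨lad, hlad⟩ := (h.exists_unique_line a d had).exists
  refine ⟨a, b, c, ⟨lad, hlad.1⟩, ⟨lbc, hlbc.1⟩, ⟨lbd, hlbd.1⟩,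
      ?_, ?_, ?_, hlbc.2.1, hlbd.2.1, ?_, hlbc.2.2, ?_⟩
  · exact fun hmem => three_notMem hb hc ha hbc hab.symm hac.symm hcol hlbc.1
      hlbc.2.1 hlbc.2.2 hmem
  · exact fun hmem => three_notMem hb hd ha hbd hab.symm had.symm hcol hlbd.1
      hlbd.2.1 hlbd.2.2 hmem
  · exact fun hmem => three_notMem ha hd hb had hab hbd.symm hcol hlad.1 hlad.2.1 hlad.2.2 hmem
  · exact fun hmem => three_notMem ha hd hc had hac hcd.symm hcol hlad.1 hlad.2.1 hlad.2.2 hmem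
  · exact fun hmem => three_notMem hb hd hc hbd hbc hcd.symm hcol hlbd.1 hlbd.2.1 hlbd.2.2 hmem

noncomputable def pp (h : IsProjectivePlane q L) :
    Configuration.ProjectivePlane P {ℓ // ℓ ∈ L} :=
  { nd h with
    mkPoint := fun {l₁ l₂} hne =>
      (h.exists_unique_point l₁.1 l₁.2 l₂.1 l₂.2 (fun hv => hne (Subtype.ext hv))).exists.choose
    mkPoint_ax := fun {l₁ l₂} hne =>
      (h.exists_unique_point l₁.1 l₁.2 l₂.1 l₂.2
        (fun hv => hne (Subtype.ext hv))).exists.choose_spec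
    mkLine := fun {p₁ p₂} hne => ⟨(h.exists_unique_line p₁ p₂ hne).exists.choose,
      (h.exists_unique_line p₁ p₂ hne).exists.choose_spec.1⟩
    mkLine_ax := fun {p₁ p₂} hne =>
      (h.exists_unique_line p₁ p₂ hne).exists.choose_spec.2
    exists_config := exists_config h }

section Counting

variable [Fintype P]

lemma pointCount_eq' (h : IsProjectivePlane q L) (l : {ℓ // ℓ ∈ L}) :
    Configuration.pointCount P l = q + 1 := by
  have : Nat.card {p : P // p ∈ l} = l.1.card := Nat.card_eq_finsetCard l.1
  rw [Configuration.pointCount, this, h.card_line l.1 l.2]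

lemma order_eq (h : IsProjectivePlane q L) :
    @Configuration.ProjectivePlane.order P {ℓ // ℓ ∈ L} instMem (pp h) = q := by
  letI := pp h
  obtain ⟨a, b, hab, -⟩ : ∃ a b : P, a ≠ b ∧ True := by
    obtain ⟨a, b, c, d, hab, -⟩ := h.nondeg; exact ⟨a, b, hab, trivial⟩
  obtain ⟨l, hl⟩ := (h.exists_unique_line a b hab).exists
  have := Configuration.ProjectivePlane.pointCount_eq P (⟨l, hl.1⟩ : {ℓ // ℓ ∈ L})
  rw [pointCount_eq' h] at this
  omega

lemma card_P (h : IsProjectivePlane q L) : Fintype.card P = q ^ 2 + q + 1 := by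
  letI := pp h
  rw [Configuration.ProjectivePlane.card_points P {ℓ // ℓ ∈ L}, order_eq h]

lemma card_L (h : IsProjectivePlane q L) : L.card = q ^ 2 + q + 1 := by
  letI := pp h
  rw [← Fintype.card_coe, Configuration.ProjectivePlane.card_lines P {ℓ // ℓ ∈ L}, order_eq h]

lemma lineCount_eq' (h : IsProjectivePlane q L) (p : P) :
    (Finset.univ.filter (fun l : {ℓ // ℓ ∈ L} => p ∈ l.1)).card = q + 1 := by
  letI := pp h
  have h1 := Configuration.ProjectivePlane.lineCount_eq {ℓ // ℓ ∈ L} p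
  rw [order_eq h, Configuration.lineCount] at h1
  have h2 : Nat.card {l : {ℓ // ℓ ∈ L} // p ∈ l.1} = q + 1 := h1
  rw [Nat.card_eq_fintype_card, Fintype.card_subtype] at h2
  exact h2

end Counting
section LinAlg

variable [Fintype P]

/-- The sum-of-coordinates linear functional. -/
noncomputable def sumF (P : Type) [Fintype P] : (P → ZMod 2) →ₗ[ZMod 2] ZMod 2 :=
  ∑ p : P, LinearMap.proj p

lemma sumF_apply (v : P → ZMod 2) : sumF P v = ∑ p : P, v p := by
  simp [sumF]

lemma card_cast_one (hodd : Odd (Fintype.card P)) :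
    ((Fintype.card P : ℕ) : ZMod 2) = 1 := by
  obtain ⟨k, hk⟩ := hodd
  rw [hk, Nat.cast_add, Nat.cast_mul, Nat.cast_ofNat, Nat.cast_one]
  simp [show (2 : ZMod 2) = 0 from rfl]

lemma finrank_ker_sumF (hodd : Odd (Fintype.card P)) :
    Module.finrank (ZMod 2) ↥(LinearMap.ker (sumF P)) = Fintype.card P - 1 := by
  have hsurj : Function.Surjective (sumF P) := by
    intro c
    refine ⟨fun _ => c, ?_⟩
    rw [sumF_apply, Finset.sum_const, Finset.card_univ, nsmul_eq_mul, card_cast_one hodd,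
      one_mul]
  have h1 := LinearMap.finrank_range_add_finrank_ker (sumF P)
  rw [LinearMap.range_eq_top.mpr hsurj, finrank_top, Module.finrank_self,
    Module.finrank_pi] at h1
  omega

/-- The all-ones-off-diagonal matrix `J + I` over `F₂`. -/
lemma rank_JI (hodd : Odd (Fintype.card P)) :
    (Matrix.of fun p p' : P => if p = p' then (0 : ZMod 2) else 1).rank
      = Fintype.card P - 1 := by
  have hpos : 0 < Fintype.card P := by have := hodd; rcases this with ⟨k, hk⟩; omega
  have hne : Nonempty P := Fintype.card_pos_iff.mp hpos
  set N : Matrix P P (ZMod 2) := Matrix.of fun p p' : P => if p = p' then (0 : ZMod 2) else 1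
    with hN
  have hmul : ∀ (x : P → ZMod 2) (p : P),
      N.mulVec x p = (∑ p' : P, x p') - x p := by
    intro x p
    have : ∀ p' : P, N p p' * x p' = x p' - (if p = p' then x p' else 0) := by
      intro p'
      by_cases hp : p = p' <;> simp [hN, hp]
    rw [Matrix.mulVec, dotProduct]
    simp_rw [this]
    rw [Finset.sum_sub_distrib, Finset.sum_ite_eq]
    simp
  have hker : LinearMap.ker N.mulVecLin = Submodule.span (ZMod 2) {(fun _ => 1 : P → ZMod 2)} := by
    apply le_antisymm
    · intro x hx
      rw [LinearMap.mem_ker] at hx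
      have hx' : ∀ p : P, x p = ∑ p' : P, x p' := by
        intro p
        have := congrFun hx p
        rw [Matrix.mulVecLin_apply, hmul] at this
        have h0 : (∑ p' : P, x p') - x p = 0 := this
        linear_combination -h0
      have : x = (∑ p' : P, x p') • (fun _ => 1 : P → ZMod 2) := by
        funext p
        simp [hx' p]
      rw [this]
      exact Submodule.smul_mem _ _ (Submodule.mem_span_singleton_self _)
    · rw [Submodule.span_le, Set.singleton_subset_iff]
      rw [SetLike.mem_coe, LinearMap.mem_ker]
      ext p
      rw [Matrix.mulVecLin_apply, hmul]
      simp [Finset.card_univ, card_cast_one hodd]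
  have hker1 : Module.finrank (ZMod 2) ↥(LinearMap.ker N.mulVecLin) = 1 := by
    rw [hker]
    exact finrank_span_singleton (by
      intro hcon
      have := congrFun hcon (Classical.arbitrary P)
      simp at this)
  have h1 := LinearMap.finrank_range_add_finrank_ker N.mulVecLin
  rw [hker1, Module.finrank_pi] at h1
  rw [Matrix.rank]
  omega

end LinAlg
end Stmt11

/-- For `q ≥ 2` odd, a finite projective plane of order `q` with line set `L`
and a projective bundle `B`, the `F₂`-rank of the concatenated point-line / point-oval
incidence matrix `H = (A | M)` equals `q² + q`; equivalently its right kernel has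
`F₂`-dimension `q² + q + 2`. -/
theorem statement_11 (q : ℕ) (hq : 2 ≤ q) (hodd : Odd q) (P : Type) [Fintype P] [DecidableEq P]
    (L : Finset (Finset P)) (hL : IsProjectivePlane q L)
    (B : Finset (Finset P)) (hB : IsProjectiveBundle q L B) :
    let H : Matrix P ({ℓ // ℓ ∈ L} ⊕ {o // o ∈ B}) (ZMod 2) :=
      Matrix.of fun p c =>
        Sum.elim (fun ℓ : {ℓ // ℓ ∈ L} => if p ∈ ℓ.1 then (1 : ZMod 2) else 0)
          (fun o : {o // o ∈ B} => if p ∈ o.1 then 1 else 0) c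
    H.rank = q ^ 2 + q ∧
    Module.finrank (ZMod 2) ↥(LinearMap.ker H.mulVecLin) = q ^ 2 + q + 2 := by
  intro H
  classical
  obtain ⟨hBcard, hBoval, -⟩ := hB
  have hP : Fintype.card P = q ^ 2 + q + 1 := Stmt11.card_P hL
  have hΛ : Fintype.card {ℓ // ℓ ∈ L} = q ^ 2 + q + 1 := by
    rw [Fintype.card_coe]; exact Stmt11.card_L hL
  have hBc : Fintype.card {o // o ∈ B} = q ^ 2 + q + 1 := by
    rw [Fintype.card_coe]; exact hBcard
  have hoddP : Odd (Fintype.card P) := by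
    obtain ⟨k, hk⟩ := hodd
    exact ⟨2 * k * k + 3 * k + 1, by rw [hP]; subst hk; ring⟩
  have hdvd : (2 : ℕ) ∣ q + 1 := by obtain ⟨k, hk⟩ := hodd; omega
  have hHl : ∀ (p : P) (l : {ℓ // ℓ ∈ L}),
      H p (Sum.inl l) = (if p ∈ l.1 then (1 : ZMod 2) else 0) := fun _ _ => rfl
  have hHr : ∀ (p : P) (o : {o // o ∈ B}),
      H p (Sum.inr o) = (if p ∈ o.1 then (1 : ZMod 2) else 0) := fun _ _ => rfl
  -- every column of `H` sums to zero
  have hcolsum : ∀ c, ∑ p : P, H p c = 0 := by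
    rintro (l | o)
    · simp_rw [hHl]
      rw [Finset.sum_boole, Finset.filter_univ_mem, hL.card_line l.1 l.2]
      exact (ZMod.natCast_eq_zero_iff _ 2).mpr hdvd
    · simp_rw [hHr]
      rw [Finset.sum_boole, Finset.filter_univ_mem, (hBoval o.1 o.2).1]
      exact (ZMod.natCast_eq_zero_iff _ 2).mpr hdvd
  -- upper bound
  have hub : H.rank ≤ q ^ 2 + q := by
    have hle : LinearMap.range H.mulVecLin ≤ LinearMap.ker (Stmt11.sumF P) := by
      rintro v ⟨x, rfl⟩
      rw [LinearMap.mem_ker, Stmt11.sumF_apply]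
      have hrw : ∀ p : P, H.mulVecLin x p = ∑ c, H p c * x c := fun p => rfl
      calc ∑ p : P, H.mulVecLin x p = ∑ p : P, ∑ c, H p c * x c := by simp_rw [hrw]
        _ = ∑ c, ∑ p : P, H p c * x c := Finset.sum_comm
        _ = ∑ c, (∑ p : P, H p c) * x c := by
            refine Finset.sum_congr rfl fun c _ => (Finset.sum_mul _ _ _).symm
        _ = 0 := by simp [hcolsum]
    calc H.rank = Module.finrank (ZMod 2) ↥(LinearMap.range H.mulVecLin) := rfl
      _ ≤ Module.finrank (ZMod 2) ↥(LinearMap.ker (Stmt11.sumF P)) :=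
          Submodule.finrank_mono hle
      _ = Fintype.card P - 1 := Stmt11.finrank_ker_sumF hoddP
      _ ≤ q ^ 2 + q := by omega
  -- lower bound
  have hlb : q ^ 2 + q ≤ H.rank := by
    set A : Matrix P {ℓ // ℓ ∈ L} (ZMod 2) :=
      Matrix.of fun p (l : {ℓ // ℓ ∈ L}) => if p ∈ l.1 then (1 : ZMod 2) else 0 with hA
    have hAAt : A * A.transpose = Matrix.of fun p p' : P => if p = p' then (0 : ZMod 2) else 1 := by
      ext p p'
      rw [Matrix.mul_apply]
      simp only [hA, Matrix.transpose_apply, Matrix.of_apply]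
      simp_rw [ite_zero_mul_ite_zero, one_mul]
      rw [Finset.sum_boole]
      by_cases hpp : p = p'
      · subst hpp
        rw [if_pos rfl]
        have hcard : (Finset.univ.filter fun l : {ℓ // ℓ ∈ L} => p ∈ l.1 ∧ p ∈ l.1).card
            = q + 1 := by
          simpa using Stmt11.lineCount_eq' hL p
        rw [hcard]
        exact (ZMod.natCast_eq_zero_iff _ 2).mpr hdvd
      · rw [if_neg hpp]
        obtain ⟨ℓ₀, hℓ₀, huniq⟩ := hL.exists_unique_line p p' hpp
        have hcard : (Finset.univ.filter fun l : {ℓ // ℓ ∈ L} => p ∈ l.1 ∧ p' ∈ l.1).card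
            = 1 := by
          rw [Finset.card_eq_one]
          refine ⟨⟨ℓ₀, hℓ₀.1⟩, ?_⟩
          ext l
          simp only [Finset.mem_filter, Finset.mem_univ, true_and, Finset.mem_singleton]
          constructor
          · intro hmem
            exact Subtype.ext (huniq l.1 ⟨l.2, hmem⟩)
          · rintro rfl
            exact hℓ₀.2
        rw [hcard, Nat.cast_one]
    have h1 : (A * A.transpose).rank = Fintype.card P - 1 := by
      rw [hAAt]; exact Stmt11.rank_JI hoddP
    have h2 : (A * A.transpose).rank ≤ A.rank := Matrix.rank_mul_le_left A A.transpose
    have h3 : A.rank ≤ H.rank := by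
      rw [Matrix.rank, Matrix.rank]
      apply Submodule.finrank_mono
      rintro v ⟨x, rfl⟩
      refine ⟨Sum.elim x 0, ?_⟩
      ext p
      rw [Matrix.mulVecLin_apply, Matrix.mulVecLin_apply, Matrix.mulVec, Matrix.mulVec,
        dotProduct, dotProduct, Fintype.sum_sum_type]
      simp [hHl, hHr, hA]
    omega
  have hrank : H.rank = q ^ 2 + q := le_antisymm hub hlb
  refine ⟨hrank, ?_⟩
  have h4 := LinearMap.finrank_range_add_finrank_ker H.mulVecLin
  rw [Module.finrank_pi, Fintype.card_sum, hΛ, hBc] at h4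
  have h5 : H.rank = Module.finrank (ZMod 2) ↥(LinearMap.range H.mulVecLin) := rfl
  omega
end

section
/- Let q ≥ 2, let (P, L) be a finite projective plane of order q, and let B be a projective bundle. Suppose L' ⊆ L is a set of r lines and O' ⊆ B is a set of s ovals, not both empty, such that every point of P belongs to an even number of elements of the disjoint union L' ⊔ O'. Then r + s ≥ q + 2. -/
namespace St12

set_option linter.unusedSectionVars false

variable {q : ℕ} {P : Type} [Fintype P] [DecidableEq P]

/-- An abstract "linear space" with all blocks of size `q+1` and every pair of
distinct points on exactly one block. Both the line set of a projective plane and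
a projective bundle satisfy this. -/
structure Geom (q : ℕ) (P : Type) [Fintype P] [DecidableEq P]
    (D : Finset (Finset P)) : Prop where
  block_card : ∀ A ∈ D, A.card = q + 1
  pair : ∀ x y : P, x ≠ y → ∃! A, A ∈ D ∧ x ∈ A ∧ y ∈ A

/-- Double counting incidences. -/
lemma sum_inter_card (S : Finset (Finset P)) (A : Finset P) :
    ∑ T ∈ S, (T ∩ A).card = ∑ x ∈ A, (S.filter (fun T => x ∈ T)).card := by
  have h : ∀ T ∈ S, (T ∩ A).card = ∑ x ∈ A, if x ∈ T then 1 else 0 := by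
    intro T _
    rw [Finset.inter_comm, ← Finset.filter_mem_eq_inter, Finset.card_filter]
  rw [Finset.sum_congr rfl h, Finset.sum_comm]
  refine Finset.sum_congr rfl ?_
  intro x _
  rw [Finset.card_filter]

/-- Double counting a relation. -/
lemma sum_filter_card_swap {α β : Type*} [DecidableEq α] [DecidableEq β]
    (M : Finset α) (S : Finset β) (R : α → β → Prop) [∀ m o, Decidable (R m o)] :
    ∑ m ∈ M, (S.filter (fun o => R m o)).card
      = ∑ o ∈ S, (M.filter (fun m => R m o)).card := by
  have h1 : ∀ m ∈ M, (S.filter (fun o => R m o)).card = ∑ o ∈ S, if R m o then 1 else 0 := by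
    intro m _; rw [Finset.card_filter]
  rw [Finset.sum_congr rfl h1, Finset.sum_comm]
  refine Finset.sum_congr rfl ?_
  intro o _
  rw [Finset.card_filter]

/-- If `f ≥ 1` on `S` and the total is `S.card`, then `f = 1` on `S`. -/
lemma all_eq_one_of_sum_eq_card {α : Type*} [DecidableEq α] {S : Finset α} {f : α → ℕ}
    (h1 : ∀ a ∈ S, 1 ≤ f a) (h2 : ∑ a ∈ S, f a = S.card) : ∀ a ∈ S, f a = 1 := by
  intro a ha
  by_contra h
  have h2a : 2 ≤ f a := by have := h1 a ha; omega
  have hsum : ∑ b ∈ S.erase a, f b + f a = ∑ b ∈ S, f b := Finset.sum_erase_add S f ha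
  have hge : (S.erase a).card ≤ ∑ b ∈ S.erase a, f b := by
    calc (S.erase a).card = ∑ b ∈ S.erase a, 1 := by
          rw [Finset.sum_const, smul_eq_mul, mul_one]
    _ ≤ ∑ b ∈ S.erase a, f b :=
          Finset.sum_le_sum (fun b hb => h1 b (Finset.mem_of_mem_erase hb))
  have hc : (S.erase a).card = S.card - 1 := Finset.card_erase_of_mem ha
  have hpos : 1 ≤ S.card := Finset.card_pos.mpr ⟨a, ha⟩
  omega

namespace Geom

variable {D : Finset (Finset P)}

lemma inter_card_le (hD : Geom q P D) {A A' : Finset P} (hA : A ∈ D) (hA' : A' ∈ D)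
    (hne : A ≠ A') : (A ∩ A').card ≤ 1 := by
  by_contra h
  push_neg at h
  obtain ⟨x, hx, y, hy, hxy⟩ := Finset.one_lt_card.mp h
  rw [Finset.mem_inter] at hx hy
  obtain ⟨C, _, hCu⟩ := hD.pair x y hxy
  exact hne ((hCu A ⟨hA, hx.1, hy.1⟩).trans (hCu A' ⟨hA', hx.2, hy.2⟩).symm)

lemma filter_pair_card (hD : Geom q P D) {x y : P} (hxy : x ≠ y) :
    (D.filter (fun A => x ∈ A ∧ y ∈ A)).card = 1 := by
  obtain ⟨C, hC, hCu⟩ := hD.pair x y hxy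
  rw [Finset.card_eq_one]
  refine ⟨C, ?_⟩
  ext A
  simp only [Finset.mem_filter, Finset.mem_singleton]
  constructor
  · rintro ⟨h1, h2, h3⟩; exact hCu A ⟨h1, h2, h3⟩
  · rintro rfl; exact ⟨hC.1, hC.2.1, hC.2.2⟩

lemma pencil_card (hD : Geom q P D) (hq : 1 ≤ q) (hP : Fintype.card P = q ^ 2 + q + 1)
    (x : P) : (D.filter (fun A => x ∈ A)).card = q + 1 := by
  classical
  set Pe := D.filter (fun A => x ∈ A) with hPe
  have hdisj : ∀ A ∈ Pe, ∀ A' ∈ Pe, A ≠ A' → Disjoint (A.erase x) (A'.erase x) := by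
    intro A hA A' hA' hne
    rw [Finset.disjoint_left]
    intro y hy hy'
    have hyx : y ≠ x := Finset.ne_of_mem_erase hy
    obtain ⟨C, _, hCu⟩ := hD.pair y x hyx
    simp only [hPe, Finset.mem_filter] at hA hA'
    exact hne ((hCu A ⟨hA.1, Finset.mem_of_mem_erase hy, hA.2⟩).trans
      (hCu A' ⟨hA'.1, Finset.mem_of_mem_erase hy', hA'.2⟩).symm)
  have hcover : Pe.biUnion (fun A => A.erase x) = Finset.univ.erase x := by
    ext y
    constructor
    · intro hy
      obtain ⟨A, _, hyA⟩ := Finset.mem_biUnion.mp hy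
      exact Finset.mem_erase.mpr ⟨Finset.ne_of_mem_erase hyA, Finset.mem_univ y⟩
    · intro hy
      have hyx : y ≠ x := Finset.ne_of_mem_erase hy
      obtain ⟨C, hC, _⟩ := hD.pair x y (Ne.symm hyx)
      refine Finset.mem_biUnion.mpr ⟨C, ?_, Finset.mem_erase.mpr ⟨hyx, hC.2.2⟩⟩
      simp only [hPe, Finset.mem_filter]; exact ⟨hC.1, hC.2.1⟩
  have h1 := Finset.card_biUnion hdisj
  rw [hcover] at h1
  have h2 : (Finset.univ.erase x).card = q ^ 2 + q := by
    rw [Finset.card_erase_of_mem (Finset.mem_univ x), Finset.card_univ, hP]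
    omega
  have h3 : ∀ A ∈ Pe, (A.erase x).card = q := by
    intro A hA
    simp only [hPe, Finset.mem_filter] at hA
    rw [Finset.card_erase_of_mem hA.2, hD.block_card A hA.1]
    omega
  rw [h2, Finset.sum_congr rfl h3, Finset.sum_const, smul_eq_mul] at h1
  have h4 : (q + 1) * q = q ^ 2 + q := by ring
  have hq0 : 0 < q := hq
  exact Nat.eq_of_mul_eq_mul_right hq0 (by omega)

lemma card_eq (hD : Geom q P D) (hq : 1 ≤ q) (hP : Fintype.card P = q ^ 2 + q + 1) :
    D.card = q ^ 2 + q + 1 := by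
  have h := sum_inter_card D Finset.univ
  have hLeft : ∑ T ∈ D, (T ∩ Finset.univ).card = D.card * (q + 1) := by
    rw [Finset.sum_congr rfl (fun T hT => by rw [Finset.inter_univ, hD.block_card T hT]),
      Finset.sum_const, smul_eq_mul]
  have hRight : ∑ x ∈ Finset.univ, (D.filter (fun T => x ∈ T)).card
      = (q ^ 2 + q + 1) * (q + 1) := by
    rw [Finset.sum_congr rfl (fun x _ => hD.pencil_card hq hP x), Finset.sum_const,
      smul_eq_mul, Finset.card_univ, hP]
  rw [hLeft, hRight] at h
  exact Nat.eq_of_mul_eq_mul_right (by omega) h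

lemma blocks_meet (hD : Geom q P D) (hq : 1 ≤ q) (hP : Fintype.card P = q ^ 2 + q + 1)
    {A A' : Finset P} (hA : A ∈ D) (hA' : A' ∈ D) (hne : A ≠ A') :
    (A ∩ A').card = 1 := by
  have hle := hD.inter_card_le hA hA' hne
  rcases Nat.lt_or_ge (A ∩ A').card 1 with h0 | h1
  · exfalso
    have hdis : A ∩ A' = ∅ := Finset.card_eq_zero.mp (by omega)
    have hApos : A.Nonempty := Finset.card_pos.mp (by rw [hD.block_card A hA]; omega)
    obtain ⟨x, hx⟩ := hApos
    have hxA' : x ∉ A' := by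
      intro h
      have : x ∈ A ∩ A' := Finset.mem_inter.mpr ⟨hx, h⟩
      rw [hdis] at this
      exact absurd this (Finset.notMem_empty x)
    set Pe := D.filter (fun C => x ∈ C) with hPe
    have hAPe : A ∈ Pe := by
      simp only [hPe, Finset.mem_filter]; exact ⟨hA, hx⟩
    have hsub : A' ⊆ (Pe.erase A).biUnion (fun C => C ∩ A') := by
      intro y hy
      have hxy : x ≠ y := fun h => hxA' (h ▸ hy)
      obtain ⟨C, hC, _⟩ := hD.pair x y hxy
      have hCA : C ≠ A := by
        intro h
        have hyA : y ∈ A ∩ A' := Finset.mem_inter.mpr ⟨h ▸ hC.2.2, hy⟩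
        rw [hdis] at hyA
        exact absurd hyA (Finset.notMem_empty y)
      refine Finset.mem_biUnion.mpr ⟨C, Finset.mem_erase.mpr ⟨hCA, ?_⟩,
        Finset.mem_inter.mpr ⟨hC.2.2, hy⟩⟩
      simp only [hPe, Finset.mem_filter]; exact ⟨hC.1, hC.2.1⟩
    have hcard : A'.card ≤ ∑ C ∈ Pe.erase A, (C ∩ A').card :=
      le_trans (Finset.card_le_card hsub) Finset.card_biUnion_le
    have hbound : ∑ C ∈ Pe.erase A, (C ∩ A').card ≤ (Pe.erase A).card := by
      calc ∑ C ∈ Pe.erase A, (C ∩ A').card ≤ ∑ C ∈ Pe.erase A, 1 := by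
            refine Finset.sum_le_sum ?_
            intro C hC
            have hCD : C ∈ D := by
              have := Finset.mem_of_mem_erase hC
              simp only [hPe, Finset.mem_filter] at this
              exact this.1
            have hCne : C ≠ A' := by
              rintro rfl
              have := Finset.mem_of_mem_erase hC
              simp only [hPe, Finset.mem_filter] at this
              exact hxA' this.2
            exact hD.inter_card_le hCD hA' hCne
      _ = (Pe.erase A).card := by rw [Finset.sum_const, smul_eq_mul, mul_one]
    have hPeA : (Pe.erase A).card = q := by
      rw [Finset.card_erase_of_mem hAPe]
      have := hD.pencil_card hq hP x
      simp only [hPe]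
      omega
    have hA'card : A'.card = q + 1 := hD.block_card A' hA'
    omega
  · omega

/-- For an arc `O` and a point `y ∈ O`, there is exactly one block tangent to `O`
at `y`. -/
lemma tangent_at_point (hD : Geom q P D) (hq : 1 ≤ q) (hP : Fintype.card P = q ^ 2 + q + 1)
    {O : Finset P} (hO1 : O.card = q + 1) (hO2 : ∀ A ∈ D, (A ∩ O).card ≤ 2)
    {y : P} (hy : y ∈ O) :
    ((D.filter (fun A => y ∈ A)).filter (fun A => (A ∩ O).card = 1)).card = 1 := by
  classical
  set Pe := D.filter (fun A => y ∈ A) with hPe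
  have hPcard : Pe.card = q + 1 := hD.pencil_card hq hP y
  have hsum : ∑ A ∈ Pe, (A ∩ O).card = 2 * q + 1 := by
    rw [sum_inter_card]
    have hterm : ∀ z ∈ O, (Pe.filter (fun A => z ∈ A)).card
        = 1 + (if z = y then q else 0) := by
      intro z hz
      by_cases hzy : z = y
      · subst hzy
        have : Pe.filter (fun A => z ∈ A) = Pe := by
          apply Finset.filter_true_of_mem
          intro A hA
          simp only [hPe, Finset.mem_filter] at hA
          exact hA.2
        rw [this, hPcard, if_pos rfl]
        omega
      · rw [if_neg hzy, Nat.add_zero]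
        have heq : Pe.filter (fun A => z ∈ A) = D.filter (fun A => y ∈ A ∧ z ∈ A) := by
          rw [hPe, Finset.filter_filter]
        rw [heq]
        exact hD.filter_pair_card (Ne.symm hzy)
    rw [Finset.sum_congr rfl hterm, Finset.sum_add_distrib, Finset.sum_const,
      smul_eq_mul, mul_one, Finset.sum_ite_eq' O y (fun _ => q), if_pos hy, hO1]
    omega
  have hsplit : (Pe.filter (fun A => (A ∩ O).card = 1)).card
      + (Pe.filter (fun A => ¬((A ∩ O).card = 1))).card = q + 1 := by
    rw [Finset.card_filter_add_card_filter_not, hPcard]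
  have hT2 : ∀ A ∈ Pe.filter (fun A => ¬((A ∩ O).card = 1)), (A ∩ O).card = 2 := by
    intro A hA
    simp only [hPe, Finset.mem_filter] at hA
    have h2 := hO2 A hA.1.1
    have h1 : 1 ≤ (A ∩ O).card :=
      Finset.card_pos.mpr ⟨y, Finset.mem_inter.mpr ⟨hA.1.2, hy⟩⟩
    omega
  have hsum2 : ∑ A ∈ Pe, (A ∩ O).card
      = (Pe.filter (fun A => (A ∩ O).card = 1)).card
        + (Pe.filter (fun A => ¬((A ∩ O).card = 1))).card * 2 := by
    rw [← Finset.sum_filter_add_sum_filter_not Pe (fun A => (A ∩ O).card = 1)]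
    congr 1
    · rw [Finset.sum_congr rfl (fun A hA => (Finset.mem_filter.mp hA).2),
        Finset.sum_const, smul_eq_mul, mul_one]
    · rw [Finset.sum_congr rfl hT2, Finset.sum_const, smul_eq_mul]
  omega

/-- An arc has exactly `q+1` tangent blocks. -/
lemma tangent_card (hD : Geom q P D) (hq : 1 ≤ q) (hP : Fintype.card P = q ^ 2 + q + 1)
    {O : Finset P} (hO1 : O.card = q + 1) (hO2 : ∀ A ∈ D, (A ∩ O).card ≤ 2) :
    (D.filter (fun A => (A ∩ O).card = 1)).card = q + 1 := by
  classical
  have key : D.filter (fun A => (A ∩ O).card = 1)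
      = O.biUnion (fun y => (D.filter (fun A => y ∈ A)).filter (fun A => (A ∩ O).card = 1)) := by
    ext A
    simp only [Finset.mem_filter, Finset.mem_biUnion]
    constructor
    · rintro ⟨hAD, hA1⟩
      obtain ⟨z, hz⟩ := Finset.card_eq_one.mp hA1
      have hzmem : z ∈ A ∩ O := by rw [hz]; exact Finset.mem_singleton_self z
      rw [Finset.mem_inter] at hzmem
      exact ⟨z, hzmem.2, ⟨⟨hAD, hzmem.1⟩, hA1⟩⟩
    · rintro ⟨y, _, ⟨⟨hAD, _⟩, hA1⟩⟩
      exact ⟨hAD, hA1⟩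
  have hdisj : ∀ y ∈ O, ∀ y' ∈ O, y ≠ y' →
      Disjoint ((D.filter (fun A => y ∈ A)).filter (fun A => (A ∩ O).card = 1))
        ((D.filter (fun A => y' ∈ A)).filter (fun A => (A ∩ O).card = 1)) := by
    intro y hy y' hy' hne
    rw [Finset.disjoint_left]
    intro A hA hA'
    simp only [Finset.mem_filter] at hA hA'
    obtain ⟨z, hz⟩ := Finset.card_eq_one.mp hA.2
    have h1 : y ∈ A ∩ O := Finset.mem_inter.mpr ⟨hA.1.2, hy⟩
    have h2 : y' ∈ A ∩ O := Finset.mem_inter.mpr ⟨hA'.1.2, hy'⟩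
    rw [hz, Finset.mem_singleton] at h1 h2
    exact hne (h1.trans h2.symm)
  rw [key, Finset.card_biUnion hdisj,
    Finset.sum_congr rfl (fun y hy => hD.tangent_at_point hq hP hO1 hO2 hy),
    Finset.sum_const, smul_eq_mul, mul_one, hO1]

/-- Two arcs meeting in exactly one point have an odd number of common tangent
blocks. -/
lemma gamma_odd (hD : Geom q P D) (hq : 1 ≤ q) (hP : Fintype.card P = q ^ 2 + q + 1)
    {O O' : Finset P} (hO1 : O.card = q + 1) (hO2 : ∀ A ∈ D, (A ∩ O).card ≤ 2)
    (hO1' : O'.card = q + 1) (hO2' : ∀ A ∈ D, (A ∩ O').card ≤ 2)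
    (hOO' : (O ∩ O').card = 1) :
    Odd ((D.filter (fun A => (A ∩ O).card = 1 ∧ (A ∩ O').card = 1)).card) := by
  classical
  have hkey : ∑ A ∈ D, (A ∩ O).card * (A ∩ O').card = (q + 1) * (q + 1) + q := by
    have hexp : ∀ A ∈ D, (A ∩ O).card * (A ∩ O').card
        = ∑ x ∈ O, ∑ y ∈ O', (if x ∈ A ∧ y ∈ A then 1 else 0) := by
      intro A _
      have e1 : (A ∩ O).card = ∑ x ∈ O, if x ∈ A then 1 else 0 := by
        rw [Finset.inter_comm, ← Finset.filter_mem_eq_inter, Finset.card_filter]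
      have e2 : (A ∩ O').card = ∑ y ∈ O', if y ∈ A then 1 else 0 := by
        rw [Finset.inter_comm, ← Finset.filter_mem_eq_inter, Finset.card_filter]
      rw [e1, e2, Finset.sum_mul_sum]
      refine Finset.sum_congr rfl fun x _ => Finset.sum_congr rfl fun y _ => ?_
      by_cases hx : x ∈ A <;> by_cases hy : y ∈ A <;> simp [hx, hy]
    rw [Finset.sum_congr rfl hexp, Finset.sum_comm]
    have hswap : ∀ x ∈ O, ∑ A ∈ D, ∑ y ∈ O', (if x ∈ A ∧ y ∈ A then 1 else 0)
        = ∑ y ∈ O', ∑ A ∈ D, (if x ∈ A ∧ y ∈ A then 1 else 0) := by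
      intro x _; exact Finset.sum_comm
    rw [Finset.sum_congr rfl hswap]
    have hinner : ∀ x ∈ O, ∀ y ∈ O', ∑ A ∈ D, (if x ∈ A ∧ y ∈ A then 1 else 0)
        = if x = y then q + 1 else 1 := by
      intro x _ y _
      rw [← Finset.card_filter]
      by_cases hxy : x = y
      · subst hxy
        rw [if_pos rfl]
        have : D.filter (fun A => x ∈ A ∧ x ∈ A) = D.filter (fun A => x ∈ A) := by
          apply Finset.filter_congr
          intro A _
          simp
        rw [this]
        exact hD.pencil_card hq hP x
      · rw [if_neg hxy]
        exact hD.filter_pair_card hxy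
    have hstep : ∀ x ∈ O, ∑ y ∈ O', (if x = y then q + 1 else 1)
        = (q + 1) + (if x ∈ O' then q else 0) := by
      intro x _
      have hre : ∀ y ∈ O', (if x = y then q + 1 else 1)
          = 1 + (if x = y then q else 0) := by
        intro y _
        by_cases h : x = y <;> simp [h] <;> omega
      rw [Finset.sum_congr rfl hre, Finset.sum_add_distrib, Finset.sum_const,
        smul_eq_mul, mul_one, hO1', Finset.sum_ite_eq O' x (fun _ => q)]
    calc ∑ x ∈ O, ∑ y ∈ O', ∑ A ∈ D, (if x ∈ A ∧ y ∈ A then 1 else 0)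
        = ∑ x ∈ O, ((q + 1) + (if x ∈ O' then q else 0)) := by
          refine Finset.sum_congr rfl fun x hx => ?_
          rw [Finset.sum_congr rfl (fun y hy => hinner x hx y hy)]
          exact hstep x hx
    _ = (q + 1) * (q + 1) + q := by
          rw [Finset.sum_add_distrib, Finset.sum_const, smul_eq_mul, hO1,
            ← Finset.sum_filter, Finset.filter_mem_eq_inter, Finset.sum_const,
            smul_eq_mul, hOO']
          omega
  have hmod : (∑ A ∈ D, (A ∩ O).card * (A ∩ O').card) % 2
      = ((D.filter (fun A => (A ∩ O).card = 1 ∧ (A ∩ O').card = 1)).card) % 2 := by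
    rw [Finset.sum_nat_mod]
    have hterm : ∀ A ∈ D, ((A ∩ O).card * (A ∩ O').card) % 2
        = if (A ∩ O).card = 1 ∧ (A ∩ O').card = 1 then 1 else 0 := by
      intro A hA
      have h1 := hO2 A hA
      have h2 := hO2' A hA
      have c1 : (A ∩ O).card = 0 ∨ (A ∩ O).card = 1 ∨ (A ∩ O).card = 2 := by omega
      have c2 : (A ∩ O').card = 0 ∨ (A ∩ O').card = 1 ∨ (A ∩ O').card = 2 := by omega
      rcases c1 with h | h | h <;> rcases c2 with h' | h' | h' <;> simp [h, h']
    rw [Finset.sum_congr rfl hterm, ← Finset.card_filter]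
  rw [Nat.odd_iff, ← hmod, hkey]
  have hqq : q * q % 2 = q % 2 := by
    conv_lhs => rw [Nat.mul_mod]
    have h2 : q % 2 = 0 ∨ q % 2 = 1 := by omega
    rcases h2 with h | h <;> rw [h]
  have e : (q + 1) * (q + 1) + q = q * q + 3 * q + 1 := by ring
  omega

/-- The pure case: a nonempty subfamily of blocks covering each of the points of one
of its members at least twice has at least `q+2` members. -/
lemma pure_bound (hD : Geom q P D) {F : Finset (Finset P)} (hF : F ⊆ D)
    {A₀ : Finset P} (hA₀ : A₀ ∈ F)
    (hcov : ∀ x ∈ A₀, 2 ≤ (F.filter (fun A => x ∈ A)).card) :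
    q + 2 ≤ F.card := by
  classical
  have hA₀D : A₀ ∈ D := hF hA₀
  have hsub : A₀ ⊆ (F.erase A₀).biUnion (fun A => A ∩ A₀) := by
    intro x hx
    have h2 := hcov x hx
    obtain ⟨A, hA, A', hA', hAA'⟩ := Finset.one_lt_card.mp
      (by omega : 1 < (F.filter (fun A => x ∈ A)).card)
    simp only [Finset.mem_filter] at hA hA'
    rcases eq_or_ne A A₀ with h | hne
    · have hne' : A' ≠ A₀ := fun hh => hAA' (h.trans hh.symm)
      exact Finset.mem_biUnion.mpr ⟨A', Finset.mem_erase.mpr ⟨hne', hA'.1⟩,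
        Finset.mem_inter.mpr ⟨hA'.2, hx⟩⟩
    · exact Finset.mem_biUnion.mpr ⟨A, Finset.mem_erase.mpr ⟨hne, hA.1⟩,
        Finset.mem_inter.mpr ⟨hA.2, hx⟩⟩
  have h1 : q + 1 ≤ ((F.erase A₀).biUnion (fun A => A ∩ A₀)).card := by
    calc q + 1 = A₀.card := (hD.block_card A₀ hA₀D).symm
    _ ≤ _ := Finset.card_le_card hsub
  have h2 : ((F.erase A₀).biUnion (fun A => A ∩ A₀)).card
      ≤ ∑ A ∈ F.erase A₀, (A ∩ A₀).card := Finset.card_biUnion_le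
  have h3 : ∑ A ∈ F.erase A₀, (A ∩ A₀).card ≤ (F.erase A₀).card := by
    calc ∑ A ∈ F.erase A₀, (A ∩ A₀).card ≤ ∑ A ∈ F.erase A₀, 1 := by
          refine Finset.sum_le_sum ?_
          intro A hA
          exact hD.inter_card_le (hF (Finset.mem_of_mem_erase hA)) hA₀D
            (Finset.ne_of_mem_erase hA)
    _ = (F.erase A₀).card := by rw [Finset.sum_const, smul_eq_mul, mul_one]
  have h4 : (F.erase A₀).card = F.card - 1 := Finset.card_erase_of_mem hA₀
  have h5 : 1 ≤ F.card := Finset.card_pos.mpr ⟨A₀, hA₀⟩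
  omega

end Geom

section Plane

variable {L : Finset (Finset P)} (hL : IsProjectivePlane q L)

lemma plane_geom (hL : IsProjectivePlane q L) : Geom q P L :=
  ⟨hL.card_line, hL.exists_unique_line⟩

lemma plane_inter_card (hL : IsProjectivePlane q L) {m ℓ : Finset P}
    (hm : m ∈ L) (hℓ : ℓ ∈ L) (hne : m ≠ ℓ) : (m ∩ ℓ).card = 1 := by
  obtain ⟨z, hz, hzu⟩ := hL.exists_unique_point m hm ℓ hℓ hne
  rw [Finset.card_eq_one]
  refine ⟨z, ?_⟩
  ext w
  simp only [Finset.mem_inter, Finset.mem_singleton]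
  constructor
  · intro hw; exact hzu w hw
  · rintro rfl; exact hz

/-- Every point misses some line. -/
lemma exists_line_avoiding (hL : IsProjectivePlane q L) (p : P) :
    ∃ ℓ ∈ L, p ∉ ℓ := by
  obtain ⟨a, b, c, d, hab, hac, had, hbc, hbd, hcd, hnd⟩ := hL.nondeg
  obtain ⟨ℓ1, hℓ1, _⟩ := hL.exists_unique_line a b hab
  obtain ⟨ℓ2, hℓ2, _⟩ := hL.exists_unique_line c d hcd
  obtain ⟨ℓ3, hℓ3, _⟩ := hL.exists_unique_line a c hac
  by_cases h1 : p ∈ ℓ1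
  · by_cases h2 : p ∈ ℓ2
    · by_cases h3 : p ∈ ℓ3
      · exfalso
        have hne13 : ℓ1 ≠ ℓ3 := by
          intro he
          have hsub : ({a, b, c} : Finset P) ⊆ ℓ1 ∩ ({a, b, c, d} : Finset P) := by
            intro z hz
            simp only [Finset.mem_insert, Finset.mem_singleton] at hz
            rw [Finset.mem_inter]
            rcases hz with rfl | rfl | rfl
            · exact ⟨hℓ1.2.1, by simp⟩
            · exact ⟨hℓ1.2.2, by simp⟩
            · exact ⟨he ▸ hℓ3.2.2, by simp⟩
          have hcard3 : ({a, b, c} : Finset P).card = 3 := by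
            rw [Finset.card_insert_of_notMem (by simp [hab, hac]),
              Finset.card_insert_of_notMem (by simp [hbc]), Finset.card_singleton]
          have hle := hnd ℓ1 hℓ1.1
          have := Finset.card_le_card hsub
          omega
        obtain ⟨z, hz, hzu⟩ := hL.exists_unique_point ℓ1 hℓ1.1 ℓ3 hℓ3.1 hne13
        have hpz : p = z := hzu p ⟨h1, h3⟩
        have haz : a = z := hzu a ⟨hℓ1.2.1, hℓ3.2.1⟩
        have hpa : p = a := hpz.trans haz.symm
        have haℓ2 : a ∈ ℓ2 := hpa ▸ h2
        have hsub : ({a, c, d} : Finset P) ⊆ ℓ2 ∩ ({a, b, c, d} : Finset P) := by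
          intro z hz
          simp only [Finset.mem_insert, Finset.mem_singleton] at hz
          rw [Finset.mem_inter]
          rcases hz with rfl | rfl | rfl
          · exact ⟨haℓ2, by simp⟩
          · exact ⟨hℓ2.2.1, by simp⟩
          · exact ⟨hℓ2.2.2, by simp⟩
        have hcard3 : ({a, c, d} : Finset P).card = 3 := by
          rw [Finset.card_insert_of_notMem (by simp [hac, had]),
            Finset.card_insert_of_notMem (by simp [hcd]), Finset.card_singleton]
        have hle := hnd ℓ2 hℓ2.1
        have := Finset.card_le_card hsub
        omega
      · exact ⟨ℓ3, hℓ3.1, h3⟩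
    · exact ⟨ℓ2, hℓ2.1, h2⟩
  · exact ⟨ℓ1, hℓ1.1, h1⟩

lemma plane_pencil_card (hL : IsProjectivePlane q L) (p : P) :
    (L.filter (fun A => p ∈ A)).card = q + 1 := by
  classical
  obtain ⟨ℓ, hℓL, hpℓ⟩ := exists_line_avoiding hL p
  set Pe := L.filter (fun A => p ∈ A) with hPe
  have h1 : ∑ m ∈ Pe, (m ∩ ℓ).card = Pe.card := by
    rw [Finset.sum_congr rfl (fun m hm => ?_), Finset.sum_const, smul_eq_mul, mul_one]
    have hmem : m ∈ L ∧ p ∈ m := by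
      have := hm; simp only [hPe, Finset.mem_filter] at this; exact this
    exact plane_inter_card hL hmem.1 hℓL (fun he => hpℓ (he ▸ hmem.2))
  have h2 : ∑ m ∈ Pe, (m ∩ ℓ).card = ∑ z ∈ ℓ, (Pe.filter (fun A => z ∈ A)).card :=
    sum_inter_card Pe ℓ
  have h3 : ∀ z ∈ ℓ, (Pe.filter (fun A => z ∈ A)).card = 1 := by
    intro z hz
    have hpz : p ≠ z := fun he => hpℓ (he ▸ hz)
    have heq : Pe.filter (fun A => z ∈ A) = L.filter (fun A => p ∈ A ∧ z ∈ A) := by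
      rw [hPe, Finset.filter_filter]
    rw [heq]
    exact (plane_geom hL).filter_pair_card hpz
  rw [h2, Finset.sum_congr rfl h3, Finset.sum_const, smul_eq_mul, mul_one,
    hL.card_line ℓ hℓL] at h1
  omega

lemma card_points (hL : IsProjectivePlane q L) (hq : 1 ≤ q) :
    Fintype.card P = q ^ 2 + q + 1 := by
  classical
  obtain ⟨a, b, c, d, hab, hac, had, hbc, hbd, hcd, hnd⟩ := hL.nondeg
  set Pe := L.filter (fun A => a ∈ A) with hPe
  have hPecard : Pe.card = q + 1 := plane_pencil_card hL a
  have hdisj : ∀ A ∈ Pe, ∀ A' ∈ Pe, A ≠ A' → Disjoint (A.erase a) (A'.erase a) := by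
    intro A hA A' hA' hne
    rw [Finset.disjoint_left]
    intro y hy hy'
    have hya : y ≠ a := Finset.ne_of_mem_erase hy
    obtain ⟨C, _, hCu⟩ := hL.exists_unique_line a y (Ne.symm hya)
    simp only [hPe, Finset.mem_filter] at hA hA'
    exact hne ((hCu A ⟨hA.1, hA.2, Finset.mem_of_mem_erase hy⟩).trans
      (hCu A' ⟨hA'.1, hA'.2, Finset.mem_of_mem_erase hy'⟩).symm)
  have hcover : (Finset.univ : Finset P) = insert a (Pe.biUnion (fun A => A.erase a)) := by
    ext y
    simp only [Finset.mem_univ, true_iff, Finset.mem_insert]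
    rcases eq_or_ne y a with rfl | hya
    · left; rfl
    · right
      obtain ⟨C, hC, _⟩ := hL.exists_unique_line a y (Ne.symm hya)
      refine Finset.mem_biUnion.mpr ⟨C, ?_, Finset.mem_erase.mpr ⟨hya, hC.2.2⟩⟩
      simp only [hPe, Finset.mem_filter]
      exact ⟨hC.1, hC.2.1⟩
  have hnot : a ∉ Pe.biUnion (fun A => A.erase a) := by
    simp
  have hsz : ∀ A ∈ Pe, (A.erase a).card = q := by
    intro A hA
    simp only [hPe, Finset.mem_filter] at hA
    rw [Finset.card_erase_of_mem hA.2, hL.card_line A hA.1]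
    omega
  have : Fintype.card P = (insert a (Pe.biUnion fun A => A.erase a)).card := by
    rw [← hcover, Finset.card_univ]
  rw [this, Finset.card_insert_of_notMem hnot, Finset.card_biUnion hdisj,
    Finset.sum_congr rfl hsz, Finset.sum_const, smul_eq_mul, hPecard]
  have : (q + 1) * q = q ^ 2 + q := by ring
  omega

end Plane

section Bundle

variable {L B : Finset (Finset P)}

lemma bundle_geom (hL : IsProjectivePlane q L) (hB : IsProjectiveBundle q L B)
    (hq : 1 ≤ q) : Geom q P B := by
  classical
  have hcardP : Fintype.card P = q ^ 2 + q + 1 := card_points hL hq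
  refine ⟨fun A hA => (hB.2.1 A hA).1, ?_⟩
  have hsub : B.biUnion (fun o => o.offDiag) ⊆ (Finset.univ : Finset P).offDiag := by
    intro z hz
    obtain ⟨o, _, hzo⟩ := Finset.mem_biUnion.mp hz
    rw [Finset.mem_offDiag] at hzo ⊢
    exact ⟨Finset.mem_univ _, Finset.mem_univ _, hzo.2.2⟩
  have hdisj : ∀ o ∈ B, ∀ o' ∈ B, o ≠ o' → Disjoint o.offDiag o'.offDiag := by
    intro o ho o' ho' hne
    rw [Finset.disjoint_left]
    rintro ⟨u, v⟩ h1 h2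
    rw [Finset.mem_offDiag] at h1 h2
    have h2le : 2 ≤ (o ∩ o').card := by
      refine Finset.one_lt_card.mpr ⟨u, Finset.mem_inter.mpr ⟨h1.1, h2.1⟩,
        v, Finset.mem_inter.mpr ⟨h1.2.1, h2.2.1⟩, h1.2.2⟩
    have := hB.2.2 o ho o' ho' hne
    omega
  have hcards : ∀ o ∈ B, o.offDiag.card = (q + 1) * (q + 1) - (q + 1) := by
    intro o ho
    rw [Finset.offDiag_card, (hB.2.1 o ho).1]
  have htotal : (B.biUnion (fun o => o.offDiag)).card
      = ((Finset.univ : Finset P).offDiag).card := by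
    rw [Finset.card_biUnion hdisj, Finset.sum_congr rfl hcards, Finset.sum_const,
      smul_eq_mul, hB.1, Finset.offDiag_card, Finset.card_univ, hcardP]
    have e1 : (q + 1) * (q + 1) - (q + 1) = q ^ 2 + q := by
      have : (q + 1) * (q + 1) = q ^ 2 + q + (q + 1) := by ring
      omega
    have e2 : (q ^ 2 + q + 1) * (q ^ 2 + q + 1)
        = (q ^ 2 + q + 1) * (q ^ 2 + q) + (q ^ 2 + q + 1) := by ring
    rw [e1, e2]
    omega
  have heq : B.biUnion (fun o => o.offDiag) = (Finset.univ : Finset P).offDiag :=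
    Finset.eq_of_subset_of_card_le hsub (le_of_eq htotal.symm)
  intro x y hxy
  have hxyo : (x, y) ∈ (Finset.univ : Finset P).offDiag :=
    Finset.mem_offDiag.mpr ⟨Finset.mem_univ _, Finset.mem_univ _, hxy⟩
  rw [← heq] at hxyo
  obtain ⟨o, hoB, hxyoo⟩ := Finset.mem_biUnion.mp hxyo
  rw [Finset.mem_offDiag] at hxyoo
  refine ⟨o, ⟨hoB, hxyoo.1, hxyoo.2.1⟩, ?_⟩
  rintro o' ⟨ho'B, hxo', hyo'⟩
  by_contra hne
  have h2le : 2 ≤ (o' ∩ o).card :=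
    Finset.one_lt_card.mpr ⟨x, Finset.mem_inter.mpr ⟨hxo', hxyoo.1⟩,
      y, Finset.mem_inter.mpr ⟨hyo', hxyoo.2.1⟩, hxy⟩
  have := hB.2.2 o' ho'B o hoB hne
  omega

end Bundle

section Engine

/-- The parity relation: for a block `A₀` of `D1`, the number of members of `O'`
tangent to `A₀`, plus `|L'| + q·[A₀ ∈ L']`, is even. -/
lemma parity_lemma (hq : 1 ≤ q) (hP : Fintype.card P = q ^ 2 + q + 1)
    {D1 D2 L' O' : Finset (Finset P)}
    (hD1 : Geom q P D1) (hcross : ∀ A ∈ D1, ∀ C ∈ D2, (A ∩ C).card ≤ 2)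
    (hL' : L' ⊆ D1) (hO' : O' ⊆ D2)
    (heven : ∀ p : P,
      Even ((L'.filter fun ℓ => p ∈ ℓ).card + (O'.filter fun o => p ∈ o).card))
    {A₀ : Finset P} (hA₀ : A₀ ∈ D1) :
    Even ((O'.filter (fun o => (o ∩ A₀).card = 1)).card
      + (L'.card + q * (if A₀ ∈ L' then 1 else 0))) := by
  classical
  have hS1 : ∑ x ∈ A₀, (L'.filter fun ℓ => x ∈ ℓ).card
      = L'.card + q * (if A₀ ∈ L' then 1 else 0) := by
    rw [← sum_inter_card L' A₀]
    have hterm : ∀ ℓ ∈ L', (ℓ ∩ A₀).card = 1 + (if ℓ = A₀ then q else 0) := by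
      intro ℓ hℓ
      by_cases h : ℓ = A₀
      · subst h
        rw [Finset.inter_self, hD1.block_card ℓ (hL' hℓ), if_pos rfl]
        omega
      · rw [if_neg h, hD1.blocks_meet hq hP (hL' hℓ) hA₀ h]
    rw [Finset.sum_congr rfl hterm, Finset.sum_add_distrib, Finset.sum_const,
      smul_eq_mul, mul_one, Finset.sum_ite_eq' L' A₀ (fun _ => q)]
    by_cases h : A₀ ∈ L' <;> simp [h]
  have hS2 : ∑ x ∈ A₀, (O'.filter fun o => x ∈ o).card = ∑ o ∈ O', (o ∩ A₀).card :=
    (sum_inter_card O' A₀).symm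
  have hEvenSum : (∑ x ∈ A₀, ((L'.filter fun ℓ => x ∈ ℓ).card
      + (O'.filter fun o => x ∈ o).card)) % 2 = 0 := by
    rw [Finset.sum_nat_mod]
    have hz : ∀ x ∈ A₀, ((L'.filter fun ℓ => x ∈ ℓ).card
        + (O'.filter fun o => x ∈ o).card) % 2 = 0 := by
      intro x _
      exact Nat.even_iff.mp (heven x)
    rw [Finset.sum_congr rfl hz]
    simp
  have hsplit : ∑ x ∈ A₀, ((L'.filter fun ℓ => x ∈ ℓ).card
        + (O'.filter fun o => x ∈ o).card)
      = (L'.card + q * (if A₀ ∈ L' then 1 else 0)) + ∑ o ∈ O', (o ∩ A₀).card := by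
    rw [Finset.sum_add_distrib, hS1, hS2]
  have hT : (∑ o ∈ O', (o ∩ A₀).card) % 2
      = ((O'.filter (fun o => (o ∩ A₀).card = 1)).card) % 2 := by
    rw [Finset.sum_nat_mod]
    have hterm : ∀ o ∈ O', (o ∩ A₀).card % 2
        = if (o ∩ A₀).card = 1 then 1 else 0 := by
      intro o ho
      have h2 : (o ∩ A₀).card ≤ 2 := by
        rw [Finset.inter_comm]
        exact hcross A₀ hA₀ o (hO' ho)
      have c : (o ∩ A₀).card = 0 ∨ (o ∩ A₀).card = 1 ∨ (o ∩ A₀).card = 2 := by omega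
      rcases c with h | h | h <;> rw [h] <;> simp
    rw [Finset.sum_congr rfl hterm, ← Finset.card_filter]
  rw [Nat.even_iff]
  rw [hsplit] at hEvenSum
  omega

/-- Main engine, first case: `|L'|` even, `O'` nonempty leads to a contradiction
when `|L'| + |O'| ≤ q + 1`. -/
lemma engine₁ (hq : 2 ≤ q) (hP : Fintype.card P = q ^ 2 + q + 1)
    {D1 D2 L' O' : Finset (Finset P)}
    (hD1 : Geom q P D1) (hD2 : Geom q P D2)
    (hcross : ∀ A ∈ D1, ∀ C ∈ D2, (A ∩ C).card ≤ 2)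
    (hL' : L' ⊆ D1) (hO' : O' ⊆ D2)
    (heven : ∀ p : P,
      Even ((L'.filter fun ℓ => p ∈ ℓ).card + (O'.filter fun o => p ∈ o).card))
    (hr : Even L'.card) (hs : O'.Nonempty)
    (H : L'.card + O'.card ≤ q + 1) : False := by
  classical
  obtain ⟨c₀, hc₀⟩ := hs
  have hc₀B : c₀ ∈ D2 := hO' hc₀
  have hc₀card : c₀.card = q + 1 := hD2.block_card c₀ hc₀B
  have hc₀arc : ∀ A ∈ D1, (A ∩ c₀).card ≤ 2 := fun A hA => hcross A hA c₀ hc₀B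
  have hq1 : 1 ≤ q := by omega
  set Tg := D1.filter (fun A => (A ∩ c₀).card = 1) with hTg
  have hTgcard : Tg.card = q + 1 := hD1.tangent_card hq1 hP hc₀card hc₀arc
  have hgam : ∀ o ∈ D2.erase c₀, (Tg.filter (fun m => (o ∩ m).card = 1)).card = 1 := by
    apply all_eq_one_of_sum_eq_card
    · intro o ho
      have hoB : o ∈ D2 := Finset.mem_of_mem_erase ho
      have hone : o ≠ c₀ := Finset.ne_of_mem_erase ho
      have hmeet : (c₀ ∩ o).card = 1 := hD2.blocks_meet hq1 hP hc₀B hoB (Ne.symm hone)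
      have hodd := hD1.gamma_odd hq1 hP hc₀card hc₀arc (hD2.block_card o hoB)
        (fun A hA => hcross A hA o hoB) hmeet
      have hident : Tg.filter (fun m => (o ∩ m).card = 1)
          = D1.filter (fun A => (A ∩ c₀).card = 1 ∧ (A ∩ o).card = 1) := by
        rw [hTg, Finset.filter_filter]
        apply Finset.filter_congr
        intro A _
        rw [Finset.inter_comm o A]
      rw [hident]
      exact hodd.pos
    · have hsw : ∑ o ∈ D2.erase c₀, (Tg.filter (fun m => (o ∩ m).card = 1)).card
          = ∑ m ∈ Tg, ((D2.erase c₀).filter (fun o => (o ∩ m).card = 1)).card :=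
        (sum_filter_card_swap Tg (D2.erase c₀) (fun m o => (o ∩ m).card = 1)).symm
      rw [hsw]
      have hterm : ∀ m ∈ Tg,
          ((D2.erase c₀).filter (fun o => (o ∩ m).card = 1)).card = q := by
        intro m hm
        rw [hTg, Finset.mem_filter] at hm
        have hfull : (D2.filter (fun o => (o ∩ m).card = 1)).card = q + 1 :=
          hD2.tangent_card hq1 hP (hD1.block_card m hm.1)
            (fun C hC => by rw [Finset.inter_comm]; exact hcross m hm.1 C hC)
        have hc₀mem : c₀ ∈ D2.filter (fun o => (o ∩ m).card = 1) := by
          rw [Finset.mem_filter]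
          exact ⟨hc₀B, by rw [Finset.inter_comm]; exact hm.2⟩
        have herase : (D2.erase c₀).filter (fun o => (o ∩ m).card = 1)
            = (D2.filter (fun o => (o ∩ m).card = 1)).erase c₀ := by
          ext o
          simp only [Finset.mem_filter, Finset.mem_erase]
          tauto
        rw [herase, Finset.card_erase_of_mem hc₀mem, hfull]
        omega
      rw [Finset.sum_congr rfl hterm, Finset.sum_const, smul_eq_mul, hTgcard,
        Finset.card_erase_of_mem hc₀B, hD2.card_eq hq1 hP]
      have : (q + 1) * q = q ^ 2 + q := by ring
      omega
  have hT1 : ∀ m ∈ Tg, 1 ≤ (O'.filter (fun o => (o ∩ m).card = 1)).card := by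
    intro m hm
    rw [hTg, Finset.mem_filter] at hm
    refine Finset.card_pos.mpr ⟨c₀, Finset.mem_filter.mpr ⟨hc₀, ?_⟩⟩
    rw [Finset.inter_comm]
    exact hm.2
  have hsum1 : ∑ m ∈ Tg, ((O'.filter (fun o => (o ∩ m).card = 1)).card - 1)
      ≤ O'.card - 1 := by
    have hterm : ∀ m ∈ Tg, (O'.filter (fun o => (o ∩ m).card = 1)).card - 1
        = ((O'.erase c₀).filter (fun o => (o ∩ m).card = 1)).card := by
      intro m hm
      rw [hTg, Finset.mem_filter] at hm
      have hc₀f : c₀ ∈ O'.filter (fun o => (o ∩ m).card = 1) :=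
        Finset.mem_filter.mpr ⟨hc₀, by rw [Finset.inter_comm]; exact hm.2⟩
      have herase : (O'.erase c₀).filter (fun o => (o ∩ m).card = 1)
          = (O'.filter (fun o => (o ∩ m).card = 1)).erase c₀ := by
        ext o
        simp only [Finset.mem_filter, Finset.mem_erase]
        tauto
      rw [herase, Finset.card_erase_of_mem hc₀f]
    rw [Finset.sum_congr rfl hterm,
      sum_filter_card_swap Tg (O'.erase c₀) (fun m o => (o ∩ m).card = 1)]
    have hle : ∀ o ∈ O'.erase c₀, (Tg.filter (fun m => (o ∩ m).card = 1)).card ≤ 1 := by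
      intro o ho
      have hoD : o ∈ D2.erase c₀ := by
        rw [Finset.mem_erase] at ho ⊢
        exact ⟨ho.1, hO' ho.2⟩
      rw [hgam o hoD]
    calc ∑ o ∈ O'.erase c₀, (Tg.filter (fun m => (o ∩ m).card = 1)).card
        ≤ ∑ o ∈ O'.erase c₀, 1 := Finset.sum_le_sum hle
    _ = (O'.erase c₀).card := by rw [Finset.sum_const, smul_eq_mul, mul_one]
    _ = O'.card - 1 := Finset.card_erase_of_mem hc₀
  have hM2 : (Tg.filter (fun m => ¬ ((O'.filter (fun o => (o ∩ m).card = 1)).card = 1))).card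
      ≤ ∑ m ∈ Tg, ((O'.filter (fun o => (o ∩ m).card = 1)).card - 1) := by
    calc (Tg.filter (fun m => ¬ ((O'.filter (fun o => (o ∩ m).card = 1)).card = 1))).card
        = ∑ m ∈ Tg.filter (fun m => ¬ ((O'.filter (fun o => (o ∩ m).card = 1)).card = 1)), 1 := by
          rw [Finset.sum_const, smul_eq_mul, mul_one]
    _ ≤ ∑ m ∈ Tg.filter (fun m => ¬ ((O'.filter (fun o => (o ∩ m).card = 1)).card = 1)),
          ((O'.filter (fun o => (o ∩ m).card = 1)).card - 1) := by
          refine Finset.sum_le_sum ?_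
          intro m hm
          rw [Finset.mem_filter] at hm
          have := hT1 m hm.1
          omega
    _ ≤ ∑ m ∈ Tg, ((O'.filter (fun o => (o ∩ m).card = 1)).card - 1) :=
          Finset.sum_le_sum_of_subset (Finset.filter_subset _ _)
  have hM1sub : Tg.filter (fun m => (O'.filter (fun o => (o ∩ m).card = 1)).card = 1)
      ⊆ L' := by
    intro m hm
    rw [Finset.mem_filter] at hm
    have hmD1 : m ∈ D1 := by
      have := hm.1
      rw [hTg, Finset.mem_filter] at this
      exact this.1
    have hpar := parity_lemma hq1 hP hD1 hcross hL' hO' heven hmD1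
    by_contra hmem
    rw [if_neg hmem, mul_zero, add_zero, hm.2] at hpar
    rcases hr with ⟨k, hk⟩
    rcases hpar with ⟨j, hj⟩
    omega
  have hM1 : (Tg.filter (fun m => (O'.filter (fun o => (o ∩ m).card = 1)).card = 1)).card
      ≤ L'.card := Finset.card_le_card hM1sub
  have hsplitTg : (Tg.filter (fun m => (O'.filter (fun o => (o ∩ m).card = 1)).card = 1)).card
      + (Tg.filter (fun m => ¬ ((O'.filter (fun o => (o ∩ m).card = 1)).card = 1))).card
      = q + 1 := by
    rw [Finset.card_filter_add_card_filter_not, hTgcard]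
  have hs1 : 1 ≤ O'.card := Finset.card_pos.mpr ⟨c₀, hc₀⟩
  omega

/-- Main engine, second case (half): if `|O'|` is odd and `|O'| ≤ q` then `q ≤ |L'|`. -/
lemma engine₂ (hq : 2 ≤ q) (hP : Fintype.card P = q ^ 2 + q + 1)
    {D1 D2 L' O' : Finset (Finset P)}
    (hD1 : Geom q P D1) (hD2 : Geom q P D2)
    (hcross : ∀ A ∈ D1, ∀ C ∈ D2, (A ∩ C).card ≤ 2)
    (hL' : L' ⊆ D1) (hO' : O' ⊆ D2)
    (heven : ∀ p : P,
      Even ((L'.filter fun ℓ => p ∈ ℓ).card + (O'.filter fun o => p ∈ o).card))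
    (hs : Odd O'.card) (hsq : O'.card ≤ q) : q ≤ L'.card := by
  classical
  have hq1 : 1 ≤ q := by omega
  have hcross2 : ∀ A ∈ D2, ∀ C ∈ D1, (A ∩ C).card ≤ 2 := by
    intro A hA C hC
    rw [Finset.inter_comm]
    exact hcross C hC A hA
  have heven2 : ∀ p : P,
      Even ((O'.filter fun o => p ∈ o).card + (L'.filter fun ℓ => p ∈ ℓ).card) := by
    intro p
    rw [Nat.add_comm]
    exact heven p
  have hstep : ∀ c ∈ D2, c ∉ O' → 1 ≤ (L'.filter (fun ℓ => (ℓ ∩ c).card = 1)).card := by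
    intro c hcD hcO
    have hpar := parity_lemma hq1 hP hD2 hcross2 hO' hL' heven2 hcD
    rw [if_neg hcO, mul_zero, add_zero] at hpar
    rcases hs with ⟨k, hk⟩
    rcases hpar with ⟨j, hj⟩
    omega
  have hcount : ∑ c ∈ D2, (L'.filter (fun ℓ => (ℓ ∩ c).card = 1)).card
      = L'.card * (q + 1) := by
    rw [sum_filter_card_swap D2 L' (fun c ℓ => (ℓ ∩ c).card = 1)]
    have hterm : ∀ ℓ ∈ L', (D2.filter (fun c => (ℓ ∩ c).card = 1)).card = q + 1 := by
      intro ℓ hℓ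
      have hident : D2.filter (fun c => (ℓ ∩ c).card = 1)
          = D2.filter (fun c => (c ∩ ℓ).card = 1) := by
        apply Finset.filter_congr
        intro c _
        rw [Finset.inter_comm]
      rw [hident]
      exact hD2.tangent_card hq1 hP (hD1.block_card ℓ (hL' hℓ))
        (fun C hC => by rw [Finset.inter_comm]; exact hcross ℓ (hL' hℓ) C hC)
    rw [Finset.sum_congr rfl hterm, Finset.sum_const, smul_eq_mul]
  have hlow : q ^ 2 + q + 1 - O'.card
      ≤ ∑ c ∈ D2, (L'.filter (fun ℓ => (ℓ ∩ c).card = 1)).card := by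
    have hsdc : (D2 \ O').card = D2.card - O'.card := Finset.card_sdiff_of_subset hO'
    calc q ^ 2 + q + 1 - O'.card = (D2 \ O').card := by
          rw [hsdc, hD2.card_eq hq1 hP]
    _ = ∑ c ∈ D2 \ O', 1 := by rw [Finset.sum_const, smul_eq_mul, mul_one]
    _ ≤ ∑ c ∈ D2 \ O', (L'.filter (fun ℓ => (ℓ ∩ c).card = 1)).card := by
          refine Finset.sum_le_sum ?_
          intro c hc
          rw [Finset.mem_sdiff] at hc
          exact hstep c hc.1 hc.2
    _ ≤ ∑ c ∈ D2, (L'.filter (fun ℓ => (ℓ ∩ c).card = 1)).card :=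
          Finset.sum_le_sum_of_subset Finset.sdiff_subset
  rw [hcount] at hlow
  by_contra hcon
  push_neg at hcon
  have hub : L'.card * (q + 1) ≤ (q - 1) * (q + 1) :=
    Nat.mul_le_mul_right _ (by omega)
  have hfinal := le_trans hlow hub
  have e1 : (q - 1) * (q + 1) + 1 = q * q := by
    obtain ⟨k, rfl⟩ : ∃ k, q = k + 1 := ⟨q - 1, by omega⟩
    simp [Nat.add_sub_cancel]
    ring
  have e2 : q ^ 2 = q * q := by ring
  omega

end Engine

end St12

/-- Let `L' ⊆ L` be a set of `r` lines and `O' ⊆ B` a set of `s` ovals of a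
projective bundle `B`, not both empty, such that every point belongs to an even number of
elements of the disjoint union `L' ⊔ O'`. Then `r + s ≥ q + 2`. -/
theorem statement_12 (q : ℕ) (hq : 2 ≤ q) (P : Type) [Fintype P] [DecidableEq P]
    (L : Finset (Finset P)) (hL : IsProjectivePlane q L)
    (B : Finset (Finset P)) (hB : IsProjectiveBundle q L B)
    (L' O' : Finset (Finset P)) (hL' : L' ⊆ L) (hO' : O' ⊆ B)
    (hne : L'.Nonempty ∨ O'.Nonempty)
    (heven : ∀ p : P,
      Even ((L'.filter fun ℓ => p ∈ ℓ).card + (O'.filter fun o => p ∈ o).card)) :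
    q + 2 ≤ L'.card + O'.card := by
  classical
  by_contra hcon
  push_neg at hcon
  have H : L'.card + O'.card ≤ q + 1 := by omega
  have hq1 : 1 ≤ q := by omega
  have hP : Fintype.card P = q ^ 2 + q + 1 := St12.card_points hL hq1
  have hGL : St12.Geom q P L := St12.plane_geom hL
  have hGB : St12.Geom q P B := St12.bundle_geom hL hB hq1
  have hcross : ∀ A ∈ L, ∀ C ∈ B, (A ∩ C).card ≤ 2 := fun A hA C hC => (hB.2.1 C hC).2 A hA
  have hcross' : ∀ A ∈ B, ∀ C ∈ L, (A ∩ C).card ≤ 2 := by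
    intro A hA C hC
    rw [Finset.inter_comm]
    exact hcross C hC A hA
  have heven' : ∀ p : P,
      Even ((O'.filter fun o => p ∈ o).card + (L'.filter fun ℓ => p ∈ ℓ).card) := by
    intro p; rw [Nat.add_comm]; exact heven p
  -- Step 0: both families are nonempty
  have hr1 : 1 ≤ L'.card := by
    by_contra h
    have hL0 : L' = ∅ := by
      rw [← Finset.card_eq_zero]; omega
    obtain ⟨o₀, ho₀⟩ : O'.Nonempty := by
      rcases hne with h' | h'
      · exact absurd hL0 (Finset.nonempty_iff_ne_empty.mp h')
      · exact h'
    have : q + 2 ≤ O'.card := by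
      refine hGB.pure_bound hO' ho₀ ?_
      intro x hx
      have he := heven x
      have h0 : (L'.filter fun ℓ => x ∈ ℓ).card = 0 := by simp [hL0]
      have h1 : 1 ≤ (O'.filter fun o => x ∈ o).card := by
        refine Finset.card_pos.mpr ⟨o₀, ?_⟩
        simp [ho₀, hx]
      rw [h0, Nat.zero_add] at he
      rcases he with ⟨k, hk⟩
      omega
    omega
  have hs1 : 1 ≤ O'.card := by
    by_contra h
    have hO0 : O' = ∅ := by
      rw [← Finset.card_eq_zero]; omega
    obtain ⟨ℓ₀, hℓ₀⟩ : L'.Nonempty := Finset.card_pos.mp (by omega)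
    have : q + 2 ≤ L'.card := by
      refine hGL.pure_bound hL' hℓ₀ ?_
      intro x hx
      have he := heven x
      have h0 : (O'.filter fun o => x ∈ o).card = 0 := by simp [hO0]
      have h1 : 1 ≤ (L'.filter fun ℓ => x ∈ ℓ).card := by
        refine Finset.card_pos.mpr ⟨ℓ₀, ?_⟩
        simp [hℓ₀, hx]
      rw [h0] at he
      rcases he with ⟨k, hk⟩
      omega
    omega
  -- Case analysis on parities
  rcases Nat.even_or_odd L'.card with hre | hro
  · exact St12.engine₁ hq hP hGL hGB hcross hL' hO' heven hre
      (Finset.card_pos.mp hs1) H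
  rcases Nat.even_or_odd O'.card with hse | hso
  · refine St12.engine₁ hq hP hGB hGL hcross' hO' hL' heven' hse
      (Finset.card_pos.mp hr1) (by omega)
  · -- both odd
    have h1 : q ≤ L'.card := St12.engine₂ hq hP hGL hGB hcross hL' hO' heven hso (by omega)
    have h2 : q ≤ O'.card := St12.engine₂ hq hP hGB hGL hcross' hO' hL' heven' hro (by omega)
    omega
end

section
/- Let q ≥ 2 be odd, let (P, L) be a finite projective plane of order q, and let B be a projective bundle. Suppose L' ⊆ L is a set of r lines and O' ⊆ B is a set of s ovals with r + s = q + 2, such that every point of P belongs to an even number of elements of L' ⊔ O'. Then either r = 1 and s = q+1, in which case O' consists exactly of the q+1 ovals of B tangent to the unique line of L', or r = q+1 and s = 1, in which case L' consists exactly of the q+1 lines tangent to the unique oval of O'. -/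
set_option linter.unusedSectionVars false
set_option linter.unusedVariables false
set_option maxHeartbeats 1000000

open Finset

section Helpers
variable {α : Type*} [DecidableEq α]

lemma filter_card_one {s : Finset α} {pr : α → Prop} [DecidablePred pr]
    (h : ∃! X, X ∈ s ∧ pr X) : (s.filter pr).card = 1 := by
  obtain ⟨X, ⟨hX, hpr⟩, huniq⟩ := h
  rw [Finset.card_eq_one]
  refine ⟨X, ?_⟩
  ext Y
  simp only [mem_filter, mem_singleton]
  exact ⟨fun ⟨h1, h2⟩ => huniq Y ⟨h1, h2⟩, fun h => h ▸ ⟨hX, hpr⟩⟩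

lemma inter_card_one {m X : Finset α} (h : ∃! p, p ∈ m ∧ p ∈ X) : (m ∩ X).card = 1 := by
  obtain ⟨p, ⟨h1, h2⟩, hu⟩ := h
  rw [Finset.card_eq_one]
  refine ⟨p, ?_⟩
  ext x
  simp only [mem_inter, mem_singleton]
  exact ⟨fun ⟨ha, hb⟩ => hu x ⟨ha, hb⟩, fun h => h ▸ ⟨h1, h2⟩⟩

lemma double_count (m : Finset α) (S : Finset (Finset α)) :
    ∑ p ∈ m, (S.filter fun X => p ∈ X).card = ∑ X ∈ S, (m ∩ X).card := by
  simp only [Finset.card_filter]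
  rw [Finset.sum_comm]
  refine Finset.sum_congr rfl fun X _ => ?_
  rw [← Finset.card_filter, Finset.filter_mem_eq_inter]

lemma cross_count {β γ : Type*} (S : Finset β) (T : Finset γ) (pr : β → γ → Prop)
    [∀ X Y, Decidable (pr X Y)] :
    ∑ X ∈ S, (T.filter fun Y => pr X Y).card = ∑ Y ∈ T, (S.filter fun X => pr X Y).card := by
  simp only [Finset.card_filter]
  exact Finset.sum_comm

lemma even_sum' {s : Finset α} {f : α → ℕ} (h : ∀ x ∈ s, Even (f x)) :
    Even (∑ x ∈ s, f x) :=
  Finset.sum_induction f Even (fun _ _ ha hb => ha.add hb) Even.zero h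

end Helpers

variable {q : ℕ} {P : Type} [DecidableEq P] {L : Finset (Finset P)}

lemma pp_exists_line_not_through (hL : IsProjectivePlane q L) (p : P) :
    ∃ ℓ ∈ L, p ∉ ℓ := by
  obtain ⟨a, b, c, d, hab, hac, had, hbc, hbd, hcd, hquad⟩ := hL.nondeg
  obtain ⟨ℓab, ⟨hab1, hab2, hab3⟩, -⟩ := hL.exists_unique_line a b hab
  obtain ⟨ℓcd, ⟨hcd1, hcd2, hcd3⟩, -⟩ := hL.exists_unique_line c d hcd
  obtain ⟨ℓac, ⟨hac1, hac2, hac3⟩, -⟩ := hL.exists_unique_line a c hac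
  -- c ∉ ℓab
  have habc : c ∉ ℓab := by
    intro hc
    have : ({a, b, c} : Finset P) ⊆ ℓab ∩ ({a, b, c, d} : Finset P) := by
      intro x hx
      simp only [mem_insert, mem_singleton] at hx
      rcases hx with rfl | rfl | rfl <;> simp [mem_inter, hab2, hab3, hc]
    have h3 : ({a, b, c} : Finset P).card = 3 := by
      rw [card_insert_of_notMem (by simp [hab, hac]), card_insert_of_notMem (by simp [hbc])]
      simp
    have := le_trans (h3 ▸ card_le_card this) (hquad ℓab hab1)
    omega
  have hacd : a ∉ ℓcd := by
    intro ha
    have : ({a, c, d} : Finset P) ⊆ ℓcd ∩ ({a, b, c, d} : Finset P) := by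
      intro x hx
      simp only [mem_insert, mem_singleton] at hx
      rcases hx with rfl | rfl | rfl <;> simp [mem_inter, hcd2, hcd3, ha]
    have h3 : ({a, c, d} : Finset P).card = 3 := by
      rw [card_insert_of_notMem (by simp [hac, had]), card_insert_of_notMem (by simp [hcd])]
      simp
    have := le_trans (h3 ▸ card_le_card this) (hquad ℓcd hcd1)
    omega
  by_cases h1 : p ∈ ℓab
  · by_cases h2 : p ∈ ℓcd
    · refine ⟨ℓac, hac1, fun h3 => ?_⟩
      -- p ∈ ℓab ∩ ℓac, both contain a, distinct lines so p = a
      have hne : ℓab ≠ ℓac := fun h => habc (h ▸ hac3)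
      obtain ⟨x, -, hxu⟩ := hL.exists_unique_point ℓab hab1 ℓac hac1 hne
      have h4 : p = x := hxu p ⟨h1, h3⟩
      have h5 : a = x := hxu a ⟨hab2, hac2⟩
      exact hacd ((h4.trans h5.symm) ▸ h2)
    · exact ⟨ℓcd, hcd1, h2⟩
  · exact ⟨ℓab, hab1, h1⟩

lemma pp_lines_through (hL : IsProjectivePlane q L) (p : P) :
    (L.filter fun ℓ => p ∈ ℓ).card = q + 1 := by
  obtain ⟨ℓ₀, hℓ₀, hp⟩ := pp_exists_line_not_through hL p
  have key : ∀ x ∈ ℓ₀, ∃! m, m ∈ L ∧ p ∈ m ∧ x ∈ m := by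
    intro x hx
    exact hL.exists_unique_line p x (by rintro rfl; exact hp hx)
  rw [← hL.card_line ℓ₀ hℓ₀]
  symm
  apply Finset.card_bij (fun x hx => (key x hx).choose)
  · intro x hx
    obtain ⟨h1, h2, h3⟩ := (key x hx).choose_spec.1
    exact mem_filter.mpr ⟨h1, h2⟩
  · intro x₁ hx₁ x₂ hx₂ heq
    by_contra hne
    obtain ⟨h1, h2, h3⟩ := (key x₁ hx₁).choose_spec.1
    obtain ⟨h1', h2', h3'⟩ := (key x₂ hx₂).choose_spec.1
    rw [heq] at h3
    obtain ⟨m, -, hmu⟩ := hL.exists_unique_line x₁ x₂ hne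
    have e1 : (key x₂ hx₂).choose = m := hmu _ ⟨h1', h3, h3'⟩
    have e2 : ℓ₀ = m := hmu _ ⟨hℓ₀, hx₁, hx₂⟩
    exact hp (e2 ▸ e1 ▸ h2')
  · intro m hm
    simp only [mem_filter] at hm
    obtain ⟨hmL, hpm⟩ := hm
    have hne : m ≠ ℓ₀ := fun h => hp (h ▸ hpm)
    obtain ⟨x, ⟨hx1, hx2⟩, -⟩ := hL.exists_unique_point m hmL ℓ₀ hℓ₀ hne
    exact ⟨x, hx2, ((key x hx2).choose_spec.2 m ⟨hmL, hpm, hx1⟩).symm⟩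


section Plane2
variable {q : ℕ} {P : Type} [DecidableEq P] {L : Finset (Finset P)}
lemma pp_cardL [Fintype P] (hL : IsProjectivePlane q L) : L.card = Fintype.card P := by
  have h := double_count (univ : Finset P) L
  simp only [univ_inter] at h
  have h1 : ∑ p ∈ (univ : Finset P), (L.filter fun X => p ∈ X).card
      = Fintype.card P * (q + 1) := by
    rw [Finset.sum_congr rfl fun p _ => pp_lines_through hL p, Finset.sum_const, smul_eq_mul,
      Finset.card_univ]
  have h2 : ∑ X ∈ L, X.card = L.card * (q + 1) := by
    rw [Finset.sum_congr rfl fun X hX => hL.card_line X hX, Finset.sum_const, smul_eq_mul]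
  rw [h1, h2] at h
  exact Nat.eq_of_mul_eq_mul_right (by omega) h.symm

lemma pp_cardP [Fintype P] (hL : IsProjectivePlane q L) :
    Fintype.card P = q ^ 2 + q + 1 := by
  have hNpos : 0 < Fintype.card P := by
    obtain ⟨a, -⟩ := hL.nondeg
    exact Fintype.card_pos_iff.mpr ⟨a⟩
  have key : ∑ x ∈ (univ : Finset P).offDiag, (L.filter fun ℓ => x.1 ∈ ℓ ∧ x.2 ∈ ℓ).card
      = Fintype.card P * Fintype.card P - Fintype.card P := by
    rw [Finset.sum_congr rfl fun x hx =>
      filter_card_one (hL.exists_unique_line x.1 x.2 (Finset.mem_offDiag.mp hx).2.2)]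
    rw [Finset.sum_const, smul_eq_mul, mul_one, Finset.offDiag_card, Finset.card_univ]
  have key2 : ∑ x ∈ (univ : Finset P).offDiag, (L.filter fun ℓ => x.1 ∈ ℓ ∧ x.2 ∈ ℓ).card
      = Fintype.card P * ((q + 1) * (q + 1) - (q + 1)) := by
    rw [cross_count]
    have : ∀ ℓ ∈ L, ((univ : Finset P).offDiag.filter fun x => x.1 ∈ ℓ ∧ x.2 ∈ ℓ).card
        = (q + 1) * (q + 1) - (q + 1) := by
      intro ℓ hℓ
      have : ((univ : Finset P).offDiag.filter fun x => x.1 ∈ ℓ ∧ x.2 ∈ ℓ) = ℓ.offDiag := by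
        ext x
        simp only [mem_filter, mem_offDiag, mem_univ, true_and]
        tauto
      rw [this, Finset.offDiag_card, hL.card_line ℓ hℓ]
    rw [Finset.sum_congr rfl this, Finset.sum_const, smul_eq_mul, pp_cardL hL]
  rw [key] at key2
  obtain ⟨K, hK⟩ : ∃ K, Fintype.card P = K + 1 := ⟨Fintype.card P - 1, by omega⟩
  rw [hK] at key2 ⊢
  have e1 : (K + 1) * (K + 1) - (K + 1) = (K + 1) * K := by
    rw [Nat.mul_succ]; omega
  have e2 : (q + 1) * (q + 1) - (q + 1) = (q + 1) * q := by
    rw [Nat.mul_succ]; omega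
  rw [e1, e2] at key2
  have : K = (q + 1) * q := Nat.eq_of_mul_eq_mul_left (by omega) key2
  rw [this]; ring

end Plane2

section Fam
variable {q : ℕ} {P : Type} [DecidableEq P] [Fintype P] {B : Finset (Finset P)}
lemma fam_deg (hcardP : Fintype.card P = q ^ 2 + q + 1)
    (hBcard : B.card = q ^ 2 + q + 1)
    (hsize : ∀ o ∈ B, o.card = q + 1)
    (hpair : ∀ o₁ ∈ B, ∀ o₂ ∈ B, o₁ ≠ o₂ → (o₁ ∩ o₂).card = 1) (p : P) :
    (B.filter fun o => p ∈ o).card = q + 1 := by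
  set n : P → ℕ := fun p => (B.filter fun o => p ∈ o).card with hn
  have S1 : ∑ p : P, n p = (q ^ 2 + q + 1) * (q + 1) := by
    rw [hn]
    simp only
    rw [double_count (univ : Finset P) B]
    simp only [univ_inter]
    rw [Finset.sum_congr rfl hsize, Finset.sum_const, smul_eq_mul, hBcard]
  have S2 : ∑ p : P, n p * n p = (q ^ 2 + q + 1) * ((q + 1) + (q ^ 2 + q)) := by
    have step : ∀ p : P, n p * n p = ∑ o₁ ∈ B, ∑ o₂ ∈ B, if p ∈ o₁ ∩ o₂ then 1 else 0 := by
      intro p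
      rw [hn]
      simp only [Finset.card_filter]
      rw [Finset.sum_mul_sum]
      refine Finset.sum_congr rfl fun o₁ _ => Finset.sum_congr rfl fun o₂ _ => ?_
      by_cases h1 : p ∈ o₁ <;> by_cases h2 : p ∈ o₂ <;> simp [h1, h2, Finset.mem_inter]
    rw [Finset.sum_congr rfl fun p _ => step p, Finset.sum_comm]
    rw [Finset.sum_congr rfl fun (o₁ : Finset P) _ =>
      Finset.sum_comm (s := (univ : Finset P)) (t := B)]
    have inner : ∀ o₁ ∈ B, ∑ o₂ ∈ B, ∑ p : P, (if p ∈ o₁ ∩ o₂ then 1 else 0)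
        = (q + 1) + (q ^ 2 + q) := by
      intro o₁ ho₁
      have e0 : ∀ o₂, ∑ p : P, (if p ∈ o₁ ∩ o₂ then 1 else 0) = (o₁ ∩ o₂).card := by
        intro o₂
        rw [← Finset.card_filter]
        congr 1
        ext x
        simp
      rw [Finset.sum_congr rfl fun o₂ _ => e0 o₂]
      rw [← Finset.add_sum_erase _ _ ho₁, Finset.inter_self, hsize o₁ ho₁]
      congr 1
      have : ∀ o₂ ∈ B.erase o₁, (o₁ ∩ o₂).card = 1 := fun o₂ ho₂ =>
        hpair o₁ ho₁ o₂ (Finset.mem_of_mem_erase ho₂) (Ne.symm (Finset.ne_of_mem_erase ho₂))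
      rw [Finset.sum_congr rfl this, Finset.sum_const, smul_eq_mul, mul_one,
        Finset.card_erase_of_mem ho₁, hBcard]
      omega
    rw [Finset.sum_congr rfl inner, Finset.sum_const, smul_eq_mul, hBcard]
  -- variance argument over ℤ
  have c1 : ∑ p : P, (n p : ℤ) = ((q : ℤ) ^ 2 + q + 1) * (q + 1) := by
    exact_mod_cast congrArg (Nat.cast : ℕ → ℤ) S1
  have c2 : ∑ p : P, (n p : ℤ) * (n p : ℤ)
      = ((q : ℤ) ^ 2 + q + 1) * ((q + 1) + (q ^ 2 + q)) := by
    exact_mod_cast congrArg (Nat.cast : ℕ → ℤ) S2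
  have T : ∑ p : P, ((n p : ℤ) - (q + 1)) ^ 2 = 0 := by
    have expand : ∀ p : P, ((n p : ℤ) - (q + 1)) ^ 2
        = (n p : ℤ) * (n p : ℤ) - 2 * (q + 1) * (n p : ℤ) + (q + 1) ^ 2 := by
      intro p; ring
    rw [Finset.sum_congr rfl fun p _ => expand p, Finset.sum_add_distrib,
      Finset.sum_sub_distrib, ← Finset.mul_sum, c1, c2, Finset.sum_const, nsmul_eq_mul,
      Finset.card_univ, hcardP]
    push_cast
    ring
  have each : ∀ p : P, ((n p : ℤ) - (q + 1)) ^ 2 = 0 := by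
    intro p
    have := (Finset.sum_eq_zero_iff_of_nonneg (fun x _ => sq_nonneg ((n x : ℤ) - (q + 1)))).mp T
    exact this p (Finset.mem_univ p)
  have : (n p : ℤ) = (q + 1) := by
    have := pow_eq_zero_iff (n := 2) (by norm_num) |>.mp (each p)
    linarith
  exact_mod_cast this

lemma fam_join (hcardP : Fintype.card P = q ^ 2 + q + 1)
    (hsize : ∀ o ∈ B, o.card = q + 1)
    (hpair : ∀ o₁ ∈ B, ∀ o₂ ∈ B, o₁ ≠ o₂ → (o₁ ∩ o₂).card = 1)
    (hdeg : ∀ p : P, (B.filter fun o => p ∈ o).card = q + 1)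
    {p p' : P} (hne : p ≠ p') : ∃! o, o ∈ B ∧ p ∈ o ∧ p' ∈ o := by
  have uniq : ∀ o₁ o₂ : Finset P, (o₁ ∈ B ∧ p ∈ o₁ ∧ p' ∈ o₁) →
      (o₂ ∈ B ∧ p ∈ o₂ ∧ p' ∈ o₂) → o₁ = o₂ := by
    rintro o₁ o₂ ⟨h1, h2, h3⟩ ⟨h4, h5, h6⟩
    by_contra hne'
    have hsub : ({p, p'} : Finset P) ⊆ o₁ ∩ o₂ := by
      intro x hx
      simp only [mem_insert, mem_singleton] at hx
      rcases hx with rfl | rfl <;> simp [mem_inter, h2, h3, h5, h6]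
    have h2le : 2 ≤ (o₁ ∩ o₂).card := by
      have : ({p, p'} : Finset P).card = 2 := card_pair hne
      exact this ▸ card_le_card hsub
    rw [hpair o₁ h1 o₂ h4 hne'] at h2le
    omega
  -- existence
  set s := B.filter fun o => p ∈ o with hs
  have hdisj : ∀ o₁ ∈ s, ∀ o₂ ∈ s, o₁ ≠ o₂ → Disjoint (o₁.erase p) (o₂.erase p) := by
    intro o₁ ho₁ o₂ ho₂ hne'
    simp only [hs, mem_filter] at ho₁ ho₂
    have hcard := hpair o₁ ho₁.1 o₂ ho₂.1 hne'
    obtain ⟨x, hx⟩ := Finset.card_eq_one.mp hcard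
    have hxp : x = p := by
      have : p ∈ o₁ ∩ o₂ := mem_inter.mpr ⟨ho₁.2, ho₂.2⟩
      rw [hx] at this
      exact (mem_singleton.mp this).symm
    rw [Finset.disjoint_left]
    intro a ha1 ha2
    have : a ∈ o₁ ∩ o₂ := mem_inter.mpr ⟨mem_of_mem_erase ha1, mem_of_mem_erase ha2⟩
    rw [hx, mem_singleton] at this
    exact (ne_of_mem_erase ha1) (this.trans hxp)
  set U := s.biUnion (fun o => o.erase p) with hU
  have hUcard : U.card = q * (q + 1) := by
    rw [hU, Finset.card_biUnion hdisj]
    have : ∀ o ∈ s, (o.erase p).card = q := by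
      intro o ho
      simp only [hs, mem_filter] at ho
      rw [Finset.card_erase_of_mem ho.2, hsize o ho.1]
      omega
    rw [Finset.sum_congr rfl this, Finset.sum_const, smul_eq_mul, hdeg p]
    ring
  have hsub : U ⊆ univ.erase p := by
    intro x hx
    rw [hU, Finset.mem_biUnion] at hx
    obtain ⟨o, -, hxo⟩ := hx
    exact mem_erase.mpr ⟨ne_of_mem_erase hxo, mem_univ x⟩
  have hEq : U = univ.erase p := by
    apply Finset.eq_of_subset_of_card_le hsub
    rw [hUcard, Finset.card_erase_of_mem (mem_univ p), Finset.card_univ, hcardP]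
    ring_nf
    omega
  have hp' : p' ∈ U := by
    rw [hEq]
    exact mem_erase.mpr ⟨hne.symm, mem_univ p'⟩
  rw [hU, Finset.mem_biUnion] at hp'
  obtain ⟨o, ho, hp'o⟩ := hp'
  simp only [hs, mem_filter] at ho
  exact ⟨o, ⟨ho.1, ho.2, mem_of_mem_erase hp'o⟩, fun o' h => uniq o' o h ⟨ho.1, ho.2, mem_of_mem_erase hp'o⟩⟩

end Fam

lemma tangent_card (F : Finset (Finset P)) (m : Finset P)
    (hdeg : ∀ p : P, (F.filter fun X => p ∈ X).card = q + 1)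
    (hjoin : ∀ p p' : P, p ≠ p' → ∃! X, X ∈ F ∧ p ∈ X ∧ p' ∈ X)
    (hsec : ∀ X ∈ F, (X ∩ m).card ≤ 2)
    (hm : m.card = q + 1) :
    (F.filter fun X => (X ∩ m).card = 1).card = q + 1 := by
  have h1 : ∀ p ∈ m, (F.filter fun X => X ∩ m = {p}).card = 1 := by
    intro p hp
    set A := F.filter fun X => p ∈ X with hA
    have hsplit := Finset.card_filter_add_card_filter_not
      (s := A) (p := fun X => X ∩ m = {p})
    have hneg : (A.filter fun X => ¬(X ∩ m = {p})).card = q := by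
      have : (m.erase p).card = q := by rw [Finset.card_erase_of_mem hp, hm]; omega
      rw [← this]
      symm
      have key : ∀ x ∈ m.erase p, ∃! X, X ∈ F ∧ p ∈ X ∧ x ∈ X := fun x hx =>
        hjoin p x (fun h => (ne_of_mem_erase hx) h.symm)
      apply Finset.card_bij (fun x hx => (key x hx).choose)
      · intro x hx
        obtain ⟨hXF, hpX, hxX⟩ := (key x hx).choose_spec.1
        simp only [hA, mem_filter]
        refine ⟨⟨hXF, hpX⟩, fun heq => ?_⟩
        have : x ∈ (key x hx).choose ∩ m := mem_inter.mpr ⟨hxX, mem_of_mem_erase hx⟩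
        rw [heq, mem_singleton] at this
        exact (ne_of_mem_erase hx) this
      · intro x₁ hx₁ x₂ hx₂ heq
        by_contra hne
        obtain ⟨hXF, hpX, hxX₁⟩ := (key x₁ hx₁).choose_spec.1
        obtain ⟨-, -, hxX₂⟩ := (key x₂ hx₂).choose_spec.1
        rw [heq] at hxX₁
        have hsub : ({p, x₁, x₂} : Finset P) ⊆ (key x₂ hx₂).choose ∩ m := by
          intro y hy
          simp only [mem_insert, mem_singleton] at hy
          rcases hy with rfl | rfl | rfl
          · exact mem_inter.mpr ⟨heq ▸ hpX, hp⟩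
          · exact mem_inter.mpr ⟨hxX₁, mem_of_mem_erase hx₁⟩
          · exact mem_inter.mpr ⟨hxX₂, mem_of_mem_erase hx₂⟩
        have hc3 : ({p, x₁, x₂} : Finset P).card = 3 := by
          rw [card_insert_of_notMem, card_insert_of_notMem, card_singleton]
          · simp [hne]
          · simp only [mem_insert, mem_singleton]
            push_neg
            exact ⟨fun h => (ne_of_mem_erase hx₁) h.symm, fun h => (ne_of_mem_erase hx₂) h.symm⟩
        have := le_trans (hc3 ▸ card_le_card hsub) (hsec _ (heq ▸ (key x₁ hx₁).choose_spec.1.1))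
        omega
      · intro X hX
        simp only [hA, mem_filter] at hX
        obtain ⟨⟨hXF, hpX⟩, hXm⟩ := hX
        have : ∃ x ∈ X ∩ m, x ≠ p := by
          by_contra hcon
          push_neg at hcon
          exact hXm (Finset.eq_singleton_iff_unique_mem.mpr
            ⟨mem_inter.mpr ⟨hpX, hp⟩, fun x hx => hcon x hx⟩)
        obtain ⟨x, hx, hxp⟩ := this
        refine ⟨x, mem_erase.mpr ⟨hxp, (mem_inter.mp hx).2⟩, ?_⟩
        exact ((key x (mem_erase.mpr ⟨hxp, (mem_inter.mp hx).2⟩)).choose_spec.2 X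
          ⟨hXF, hpX, (mem_inter.mp hx).1⟩).symm
    have hposf : F.filter (fun X => X ∩ m = {p}) = A.filter (fun X => X ∩ m = {p}) := by
      rw [hA, Finset.filter_filter]
      refine Finset.filter_congr fun X hX => ?_
      constructor
      · intro h
        have : p ∈ X ∩ m := by rw [h]; exact mem_singleton_self p
        exact ⟨(mem_inter.mp this).1, h⟩
      · exact fun h => h.2
    rw [hposf]
    have hAcard : A.card = q + 1 := hdeg p
    omega
  have h2 : (F.filter fun X => (X ∩ m).card = 1)
      = m.biUnion fun p => F.filter fun X => X ∩ m = {p} := by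
    ext X
    simp only [mem_filter, Finset.mem_biUnion]
    constructor
    · rintro ⟨hXF, hc⟩
      obtain ⟨a, ha⟩ := Finset.card_eq_one.mp hc
      have ham : a ∈ m := (mem_inter.mp (ha ▸ mem_singleton_self a)).2
      exact ⟨a, ham, hXF, ha⟩
    · rintro ⟨a, ham, hXF, ha⟩
      exact ⟨hXF, by rw [ha, card_singleton]⟩
  rw [h2, Finset.card_biUnion, Finset.sum_congr rfl h1, Finset.sum_const, smul_eq_mul, mul_one, hm]
  intro p₁ hp₁ p₂ hp₂ hne
  simp only [Function.onFun]
  rw [Finset.disjoint_left]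
  intro X hX1 hX2
  simp only [mem_filter] at hX1 hX2
  exact hne (by rw [← Finset.singleton_inj, ← hX1.2, hX2.2])

lemma core {q : ℕ} (hq : 2 ≤ q) (hodd : Odd q) {P : Type} [Fintype P] [DecidableEq P]
    (F G : Finset (Finset P))
    (hFcard : F.card = q ^ 2 + q + 1)
    (hFsize : ∀ X ∈ F, X.card = q + 1) (hGsize : ∀ Y ∈ G, Y.card = q + 1)
    (hFF : ∀ X₁ ∈ F, ∀ X₂ ∈ F, X₁ ≠ X₂ → (X₁ ∩ X₂).card = 1)
    (hGG : ∀ Y₁ ∈ G, ∀ Y₂ ∈ G, Y₁ ≠ Y₂ → (Y₁ ∩ Y₂).card = 1)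
    (hFG : ∀ X ∈ F, ∀ Y ∈ G, (X ∩ Y).card ≤ 2)
    (hFdeg : ∀ p : P, (F.filter fun X => p ∈ X).card = q + 1)
    (hFjoin : ∀ p p' : P, p ≠ p' → ∃! X, X ∈ F ∧ p ∈ X ∧ p' ∈ X)
    (hGdeg : ∀ p : P, (G.filter fun Y => p ∈ Y).card = q + 1)
    (hGjoin : ∀ p p' : P, p ≠ p' → ∃! Y, Y ∈ G ∧ p ∈ Y ∧ p' ∈ Y)
    (F' G' : Finset (Finset P)) (hF' : F' ⊆ F) (hG' : G' ⊆ G)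
    (hcard : F'.card + G'.card = q + 2)
    (heven : ∀ p : P,
      Even ((F'.filter fun X => p ∈ X).card + (G'.filter fun Y => p ∈ Y).card))
    (hro : Odd F'.card) :
    F'.card = 1 ∧ G'.card = q + 1 ∧
      ∃ X, F' = {X} ∧ G' = G.filter fun Y => (Y ∩ X).card = 1 := by
  obtain ⟨k, hk⟩ := hodd
  obtain ⟨j, hj⟩ := hro
  -- Step 1: every member of F not in F' is tangent to some member of G'
  have ht : ∀ m ∈ F, m ∉ F' → ∃ Y ∈ G', (m ∩ Y).card = 1 := by
    intro m hm hm'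
    have hev : Even (∑ p ∈ m, ((F'.filter fun X => p ∈ X).card
        + (G'.filter fun Y => p ∈ Y).card)) := even_sum' fun p _ => heven p
    rw [Finset.sum_add_distrib, double_count m F', double_count m G'] at hev
    have hF'sum : ∑ X ∈ F', (m ∩ X).card = F'.card := by
      rw [Finset.sum_congr rfl fun X hX =>
        hFF m hm X (hF' hX) (fun h => hm' (h ▸ hX)), Finset.sum_const, smul_eq_mul, mul_one]
    rw [hF'sum] at hev
    by_contra hcon
    push_neg at hcon
    have : Even (∑ Y ∈ G', (m ∩ Y).card) := by
      apply even_sum'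
      intro Y hY
      have h2 := hFG m hm Y (hG' hY)
      have h1 := hcon Y hY
      rw [Nat.even_iff]
      omega
    rw [Nat.even_iff] at hev this
    omega
  -- Step 2: count tangencies
  have key : ∑ m ∈ F, (G'.filter fun Y => (m ∩ Y).card = 1).card = G'.card * (q + 1) := by
    rw [cross_count F G' (fun m Y => (m ∩ Y).card = 1)]
    have : ∀ Y ∈ G', (F.filter fun m => (m ∩ Y).card = 1).card = q + 1 := by
      intro Y hY
      exact tangent_card F Y hFdeg hFjoin (fun X hX => hFG X hX Y (hG' hY))
        (hGsize Y (hG' hY))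
    rw [Finset.sum_congr rfl this, Finset.sum_const, smul_eq_mul]
  have hlow : F.card - F'.card ≤ ∑ m ∈ F, (G'.filter fun Y => (m ∩ Y).card = 1).card := by
    calc F.card - F'.card = (F \ F').card := (Finset.card_sdiff_of_subset hF').symm
    _ = ∑ m ∈ F \ F', 1 := by rw [Finset.sum_const, smul_eq_mul, mul_one]
    _ ≤ ∑ m ∈ F \ F', (G'.filter fun Y => (m ∩ Y).card = 1).card := by
        apply Finset.sum_le_sum
        intro m hm
        rw [Finset.mem_sdiff] at hm
        obtain ⟨Y, hY, hY1⟩ := ht m hm.1 hm.2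
        exact Finset.card_pos.mpr ⟨Y, Finset.mem_filter.mpr ⟨hY, hY1⟩⟩
    _ ≤ ∑ m ∈ F, (G'.filter fun Y => (m ∩ Y).card = 1).card :=
        Finset.sum_le_sum_of_subset (Finset.sdiff_subset)
  rw [key, hFcard] at hlow
  -- Step 3: conclude r = 1, s = q + 1
  have hr1 : F'.card = 1 ∧ G'.card = q + 1 := by
    have h2 : q ^ 2 + q + 1 ≤ G'.card * (q + 1) + F'.card := by omega
    have hqs : q ≤ G'.card := by
      by_contra hcon
      push_neg at hcon
      have e3 : (G'.card + 1) * q ≤ q * q := Nat.mul_le_mul_right q (by omega)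
      have e4 : (G'.card + 1) * q = G'.card * q + q := by ring
      have e5 : q * q = q ^ 2 := by ring
      have e6 : G'.card * (q + 1) = G'.card * q + G'.card := by ring
      linarith
    omega
  obtain ⟨hr, hs⟩ := hr1
  refine ⟨hr, hs, ?_⟩
  obtain ⟨X₀, hX₀⟩ := Finset.card_eq_one.mp hr
  have hX₀F : X₀ ∈ F := hF' (hX₀ ▸ Finset.mem_singleton_self X₀)
  refine ⟨X₀, hX₀, ?_⟩
  -- Step 5: every member of G' is tangent to X₀
  have hsub : G' ⊆ G.filter fun Y => (Y ∩ X₀).card = 1 := by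
    intro Y hY
    have hYG : Y ∈ G := hG' hY
    have hev : Even (∑ p ∈ Y, ((F'.filter fun X => p ∈ X).card
        + (G'.filter fun Y' => p ∈ Y').card)) := even_sum' fun p _ => heven p
    rw [Finset.sum_add_distrib, double_count Y F', double_count Y G'] at hev
    have e1 : ∑ X ∈ F', (Y ∩ X).card = (Y ∩ X₀).card := by
      rw [hX₀, Finset.sum_singleton]
    have e2 : ∑ Y' ∈ G', (Y ∩ Y').card = 2 * q + 1 := by
      rw [← Finset.add_sum_erase _ _ hY, Finset.inter_self, hGsize Y hYG]
      have : ∀ Y' ∈ G'.erase Y, (Y ∩ Y').card = 1 := fun Y' hY' =>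
        hGG Y hYG Y' (hG' (Finset.mem_of_mem_erase hY'))
          (fun h => (Finset.ne_of_mem_erase hY') h.symm)
      rw [Finset.sum_congr rfl this, Finset.sum_const, smul_eq_mul, mul_one,
        Finset.card_erase_of_mem hY, hs]
      omega
    rw [e1, e2] at hev
    have hle : (Y ∩ X₀).card ≤ 2 := by
      rw [Finset.inter_comm]
      exact hFG X₀ hX₀F Y hYG
    rw [Nat.even_iff] at hev
    refine Finset.mem_filter.mpr ⟨hYG, by omega⟩
  -- Step 6: both sides have the same cardinality
  have htc : (G.filter fun Y => (Y ∩ X₀).card = 1).card = q + 1 := by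
    have := tangent_card G X₀ hGdeg hGjoin (fun Y hY => by
      rw [Finset.inter_comm] at *
      exact (Finset.inter_comm X₀ Y) ▸ hFG X₀ hX₀F Y hY) (hFsize X₀ hX₀F)
    exact this
  exact Finset.eq_of_subset_of_card_le hsub (by omega)

/-- For `q ≥ 2` odd: if `r` lines `L' ⊆ L` and `s` ovals `O' ⊆ B` with
`r + s = q + 2` cover every point an even number of times, then either `r = 1`, `s = q + 1`
and `O'` consists exactly of the `q + 1` ovals of `B` tangent to the unique line of `L'`,
or `r = q + 1`, `s = 1` and `L'` consists exactly of the `q + 1` lines tangent to the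
unique oval of `O'`. -/
theorem statement_13 (q : ℕ) (hq : 2 ≤ q) (hodd : Odd q) (P : Type) [Fintype P] [DecidableEq P]
    (L : Finset (Finset P)) (hL : IsProjectivePlane q L)
    (B : Finset (Finset P)) (hB : IsProjectiveBundle q L B)
    (L' O' : Finset (Finset P)) (hL' : L' ⊆ L) (hO' : O' ⊆ B)
    (hcard : L'.card + O'.card = q + 2)
    (heven : ∀ p : P,
      Even ((L'.filter fun ℓ => p ∈ ℓ).card + (O'.filter fun o => p ∈ o).card)) :
    (L'.card = 1 ∧ O'.card = q + 1 ∧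
      ∃ ℓ, L' = {ℓ} ∧ O' = B.filter fun o => (o ∩ ℓ).card = 1) ∨
    (L'.card = q + 1 ∧ O'.card = 1 ∧
      ∃ o, O' = {o} ∧ L' = L.filter fun ℓ => (ℓ ∩ o).card = 1) := by
  have hcardP : Fintype.card P = q ^ 2 + q + 1 := pp_cardP hL
  have hcardL : L.card = q ^ 2 + q + 1 := (pp_cardL hL).trans hcardP
  have hLL : ∀ ℓ₁ ∈ L, ∀ ℓ₂ ∈ L, ℓ₁ ≠ ℓ₂ → (ℓ₁ ∩ ℓ₂).card = 1 := fun ℓ₁ h₁ ℓ₂ h₂ hne =>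
    inter_card_one (hL.exists_unique_point ℓ₁ h₁ ℓ₂ h₂ hne)
  have hBsize : ∀ o ∈ B, o.card = q + 1 := fun o ho => (hB.2.1 o ho).1
  have hBB := hB.2.2
  have hBcard := hB.1
  have hBdeg : ∀ p : P, (B.filter fun o => p ∈ o).card = q + 1 :=
    fam_deg hcardP hBcard hBsize hBB
  have hBjoin : ∀ p p' : P, p ≠ p' → ∃! o, o ∈ B ∧ p ∈ o ∧ p' ∈ o := fun p p' hne =>
    fam_join hcardP hBsize hBB hBdeg hne
  have hLB : ∀ ℓ ∈ L, ∀ o ∈ B, (ℓ ∩ o).card ≤ 2 := fun ℓ hℓ o ho => (hB.2.1 o ho).2 ℓ hℓ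
  have hBL : ∀ o ∈ B, ∀ ℓ ∈ L, (o ∩ ℓ).card ≤ 2 := fun o ho ℓ hℓ =>
    Finset.inter_comm o ℓ ▸ hLB ℓ hℓ o ho
  rcases Nat.even_or_odd L'.card with hre | hro
  · -- L'.card even, hence O'.card odd: the roles of ovals and lines swap
    right
    have hso : Odd O'.card := by
      obtain ⟨k, hk⟩ := hodd
      obtain ⟨j, hj⟩ := hre
      refine Nat.odd_iff.mpr ?_
      omega
    have := core hq hodd B L hBcard hBsize hL.card_line hBB hLL hBL hBdeg hBjoin
      (pp_lines_through hL) hL.exists_unique_line O' L' hO' hL'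
      (by omega) (fun p => (Nat.add_comm _ _) ▸ heven p) hso
    obtain ⟨h1, h2, o, h3, h4⟩ := this
    exact ⟨h2, h1, o, h3, h4⟩
  · left
    have := core hq hodd L B hcardL hL.card_line hBsize hLL hBB hLB
      (pp_lines_through hL) hL.exists_unique_line hBdeg hBjoin L' O' hL' hO'
      hcard heven hro
    obtain ⟨h1, h2, ℓ, h3, h4⟩ := this
    exact ⟨h1, h2, ℓ, h3, h4⟩
end
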